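/- arXiv:2410.02407 — 9 statements merged into one kernel-verified Lean document; each statement's English description precedes it below -/
import Mathlib

section
/- (Lemma 4, shift part.) For all j, k, ℓ ∈ ZMod d, conjugation of the collective operators by the N-fold tensor power of the shift matrix cyclically lowers indices: X̄ᴴ S~^(j,k) X̄ = S~^(j−1,k−1), X̄ᴴ A~^(j,k) X̄ = A~^(j−1,k−1), and X̄ᴴ D~^(ℓ) X̄ = D~^(ℓ−1), where X̄ᴴ is the conjugate transpose of X̄. -/
open Matrix Complex Finset

/-- ζ = exp(2πi/d). -/
noncomputable def zeta (d : ℕ) : ℂ := Complex.exp (2 * Real.pi * Complex.I / d)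

/-- The shift matrix X = Σ_p |p+1⟩⟨p|. -/
noncomputable def shiftX (d : ℕ) [NeZero d] : Matrix (ZMod d) (ZMod d) ℂ :=
  ∑ p : ZMod d, Matrix.single (p + 1) p 1

/-- The clock matrix Z = Σ_p ζ^p |p⟩⟨p|. -/
noncomputable def clockZ (d : ℕ) [NeZero d] : Matrix (ZMod d) (ZMod d) ℂ :=
  ∑ p : ZMod d, Matrix.single p p (zeta d ^ p.val)

/-- S^(j,k) = |j⟩⟨k| + |k⟩⟨j|. -/
noncomputable def Smat (d : ℕ) (j k : ZMod d) : Matrix (ZMod d) (ZMod d) ℂ :=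
  Matrix.single j k 1 + Matrix.single k j 1

/-- A^(j,k) = −i|j⟩⟨k| + i|k⟩⟨j|. -/
noncomputable def Amat (d : ℕ) (j k : ZMod d) : Matrix (ZMod d) (ZMod d) ℂ :=
  (-Complex.I) • Matrix.single j k 1 + Complex.I • Matrix.single k j 1

/-- D^(ℓ) = |ℓ⟩⟨ℓ| − |ℓ+1⟩⟨ℓ+1|. -/
noncomputable def Dmat (d : ℕ) (ℓ : ZMod d) : Matrix (ZMod d) (ZMod d) ℂ :=
  Matrix.single ℓ ℓ 1 - Matrix.single (ℓ + 1) (ℓ + 1) 1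

/-- M acting at site i of an N-qudit system. -/
noncomputable def site (d N : ℕ) [NeZero d] (M : Matrix (ZMod d) (ZMod d) ℂ) (i : Fin N) :
    Matrix (Fin N → ZMod d) (Fin N → ZMod d) ℂ :=
  Matrix.of fun f g =>
    M (f i) (g i) * ∏ j ∈ Finset.univ.erase i, (if f j = g j then (1 : ℂ) else 0)

/-- The collective operator M~ = Σ_i M_[i]. -/
noncomputable def coll (d N : ℕ) [NeZero d] (M : Matrix (ZMod d) (ZMod d) ℂ) :
    Matrix (Fin N → ZMod d) (Fin N → ZMod d) ℂ :=
  ∑ i : Fin N, site d N M i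

/-- The N-fold tensor power of a d×d matrix. -/
noncomputable def tpow (d N : ℕ) [NeZero d] (M : Matrix (ZMod d) (ZMod d) ℂ) :
    Matrix (Fin N → ZMod d) (Fin N → ZMod d) ℂ :=
  Matrix.of fun f g => ∏ i : Fin N, M (f i) (g i)

/-- Inner product of N-qudit vectors, conjugate-linear in the first argument. -/
noncomputable def qinner (d N : ℕ) [NeZero d] (v w : (Fin N → ZMod d) → ℂ) : ℂ :=
  ∑ f : Fin N → ZMod d, star (v f) * w f

/-- A content u is admissible if all entries are nonnegative and they sum to N. -/
def admissible (d N : ℕ) [NeZero d] (u : ZMod d → ℤ) : Prop :=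
  (∀ k, 0 ≤ u k) ∧ ∑ k : ZMod d, u k = (N : ℤ)

/-- The Dicke vector |S_u⟩: sum of standard basis vectors over all f with |f⁻¹{k}| = u_k. -/
noncomputable def dicke (d N : ℕ) [NeZero d] (u : ZMod d → ℤ) : (Fin N → ZMod d) → ℂ :=
  fun f =>
    if ∀ k : ZMod d, ((Finset.univ.filter fun i => f i = k).card : ℤ) = u k then 1 else 0

/-- The weight Σ_{m=0}^{d−1} m·u_m of a content. -/
def cweight (d : ℕ) (u : ZMod d → ℤ) : ℤ :=
  ∑ m ∈ Finset.range d, (m : ℤ) * u ((m : ℕ) : ZMod d)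

/-- The code word |0̄⟩ determined by coefficients α. -/
noncomputable def codeZero (d N : ℕ) [NeZero d] (α : (ZMod d → ℤ) →₀ ℂ) :
    (Fin N → ZMod d) → ℂ :=
  α.sum fun u c => c • dicke d N u

/-- The code word |k̄⟩ = X̄^k |0̄⟩. -/
noncomputable def codeword (d N : ℕ) [NeZero d] (α : (ZMod d → ℤ) →₀ ℂ) (k : ZMod d) :
    (Fin N → ZMod d) → ℂ :=
  (tpow d N (shiftX d)) ^ k.val *ᵥ codeZero d N α

/-- Sparseness of the code determined by α. -/
def sparse (d : ℕ) [NeZero d] (α : (ZMod d → ℤ) →₀ ℂ) : Prop :=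
  ∀ u ∈ α.support, ∀ u' ∈ α.support, ∀ δ : ZMod d,
    (u, δ) ≠ (u', (0 : ZMod d)) → 4 < ∑ ξ : ZMod d, |u ξ - u' (ξ + δ)|



lemma shiftX_apply (d : ℕ) [NeZero d] (a b : ZMod d) :
    shiftX d a b = if a = b + 1 then (1:ℂ) else 0 := by
  simp only [shiftX, Matrix.sum_apply, Matrix.single, Matrix.of_apply]
  rw [Finset.sum_eq_single b]
  · simp [eq_comm]
  · intro p _ hp; simp [hp]
  · simp

lemma tpow_shiftX_apply (d N : ℕ) [NeZero d] (f g : Fin N → ZMod d) :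
    tpow d N (shiftX d) f g = if f = (fun i => g i + 1) then 1 else 0 := by
  simp only [tpow, Matrix.of_apply, shiftX_apply, Finset.prod_boole]
  simp [funext_iff]

lemma conj_coll (d N : ℕ) [NeZero d] (M : Matrix (ZMod d) (ZMod d) ℂ) :
    (tpow d N (shiftX d))ᴴ * coll d N M * tpow d N (shiftX d) =
      coll d N (Matrix.of fun a b => M (a + 1) (b + 1)) := by
  ext f g
  simp only [Matrix.mul_apply, Matrix.conjTranspose_apply, tpow_shiftX_apply]
  simp only [apply_ite star, star_one, star_zero, ite_mul, one_mul, zero_mul, mul_ite, mul_one,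
    mul_zero]
  simp only [Finset.sum_ite_eq', Finset.mem_univ, if_true]
  show coll d N M (fun i => f i + 1) (fun i => g i + 1)
      = coll d N (Matrix.of fun a b => M (a+1) (b+1)) f g
  simp [coll, site, Matrix.sum_apply]

/-- Lemma 4, shift part. -/
theorem stmt2 (d N : ℕ) [NeZero d] (hd : 2 ≤ d) (hN : 1 ≤ N) (j k ℓ : ZMod d) :
    (tpow d N (shiftX d))ᴴ * coll d N (Smat d j k) * tpow d N (shiftX d) =
      coll d N (Smat d (j - 1) (k - 1)) ∧
    (tpow d N (shiftX d))ᴴ * coll d N (Amat d j k) * tpow d N (shiftX d) =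
      coll d N (Amat d (j - 1) (k - 1)) ∧
    (tpow d N (shiftX d))ᴴ * coll d N (Dmat d ℓ) * tpow d N (shiftX d) =
      coll d N (Dmat d (ℓ - 1)) := by
  refine ⟨?_, ?_, ?_⟩ <;> rw [conj_coll] <;> refine congrArg (coll d N) ?_ <;> ext a b
  · simp [Smat, Matrix.single, sub_eq_iff_eq_add]
  · simp [Amat, Matrix.single, sub_eq_iff_eq_add]
  · simp [Dmat, Matrix.single, sub_eq_iff_eq_add, sub_add_cancel]
end

section
/- (Lemma 4, clock part.) For all j, k ∈ ZMod d, conjugation of the collective operator S~^(j,k) by the N-fold tensor power of the clock matrix satisfies Z̄ᴴ S~^(j,k) Z̄ = Re(ζ^{k−j})·S~^(j,k) − Im(ζ^{k−j})·A~^(j,k), where Z̄ᴴ is the conjugate transpose of Z̄ and the exponent k−j is taken in ZMod d. -/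
open Matrix Complex Finset

section Aux

lemma zeta_pow_d' (d : ℕ) [NeZero d] : zeta d ^ d = 1 := by
  rw [zeta, ← Complex.exp_nat_mul]
  have hd : (d : ℂ) ≠ 0 := Nat.cast_ne_zero.mpr (NeZero.ne d)
  rw [show (d : ℂ) * (2 * Real.pi * Complex.I / d) = 2 * Real.pi * Complex.I by field_simp]
  exact Complex.exp_two_pi_mul_I

lemma zeta_abs' (d : ℕ) : ‖zeta d‖ = 1 := by
  rw [zeta, show (2 * (Real.pi:ℂ) * Complex.I / d) = ((2 * Real.pi / d : ℝ) : ℂ) * Complex.I by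
    push_cast; ring]
  exact Complex.norm_exp_ofReal_mul_I _

lemma zeta_pow_mod' (d : ℕ) [NeZero d] {m n : ℕ} (h : m % d = n % d) :
    zeta d ^ m = zeta d ^ n := by
  conv_lhs => rw [← Nat.div_add_mod m d]
  conv_rhs => rw [← Nat.div_add_mod n d]
  rw [pow_add, pow_add, pow_mul, pow_mul, zeta_pow_d', one_pow, one_pow, h]

lemma zeta_key (d : ℕ) [NeZero d] (a b : ZMod d) :
    star (zeta d ^ a.val) * zeta d ^ b.val = zeta d ^ (b - a).val := by
  have h1 : star (zeta d ^ a.val) * zeta d ^ a.val = 1 := by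
    rw [Complex.star_def, mul_comm, Complex.mul_conj, Complex.normSq_eq_norm_sq, norm_pow, zeta_abs']
    norm_num
  have h2 : zeta d ^ b.val = zeta d ^ (b - a).val * zeta d ^ a.val := by
    rw [← pow_add]
    refine zeta_pow_mod' d ?_
    have hba : ((b - a) + a) = b := sub_add_cancel b a
    calc b.val % d = ((b - a) + a).val % d := by rw [hba]
      _ = ((b - a).val + a.val) % d % d := by rw [ZMod.val_add]
      _ = ((b - a).val + a.val) % d := Nat.mod_mod_of_dvd _ dvd_rfl
  rw [h2, mul_comm (zeta d ^ (b-a).val), ← mul_assoc, h1, one_mul]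

lemma conj_zeta_pow' (d : ℕ) [NeZero d] (a : ZMod d) :
    (starRingEnd ℂ) (zeta d ^ a.val) = zeta d ^ (-a).val := by
  have := zeta_key d a 0
  simpa [ZMod.val_zero, Complex.star_def, zero_sub] using this

lemma conj_eq_re_sub_im' (z : ℂ) :
    (starRingEnd ℂ) z = (z.re : ℂ) - (z.im : ℂ) * Complex.I := by
  apply Complex.ext <;> simp

lemma zeta_core (d : ℕ) [NeZero d] (j k a b : ZMod d) :
    star (zeta d ^ a.val) * zeta d ^ b.val * Smat d j k a b =
      ((zeta d ^ (k - j).val).re : ℂ) * Smat d j k a b -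
      ((zeta d ^ (k - j).val).im : ℂ) * Amat d j k a b := by
  rw [zeta_key]
  have h4 := Complex.re_add_im (zeta d ^ (k - j).val)
  have h5 := conj_eq_re_sub_im' (zeta d ^ (k - j).val)
  simp only [Smat, Amat, Matrix.add_apply, Matrix.smul_apply, Matrix.single,
    Matrix.of_apply, smul_eq_mul]
  split_ifs with h1 h2 h2
  · obtain ⟨rfl, rfl⟩ := h1
    obtain ⟨rfl, -⟩ := h2
    simp
  · obtain ⟨rfl, rfl⟩ := h1
    linear_combination -h4
  · obtain ⟨rfl, rfl⟩ := h2
    have h3 : zeta d ^ (j - k).val = (starRingEnd ℂ) (zeta d ^ (k - j).val) := by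
      rw [conj_zeta_pow', neg_sub]
    linear_combination h3 + h5
  · ring

lemma clockZ_apply' (d : ℕ) [NeZero d] (p q : ZMod d) :
    clockZ d p q = if p = q then zeta d ^ p.val else 0 := by
  rw [clockZ, Matrix.sum_apply]
  rw [Finset.sum_eq_single p]
  · simp [Matrix.single, eq_comm]
  · intro r _ hr
    simp [Matrix.single, hr]
  · simp

lemma tpow_clockZ' (d N : ℕ) [NeZero d] :
    tpow d N (clockZ d) = Matrix.diagonal (fun f => ∏ i : Fin N, zeta d ^ (f i).val) := by
  ext f g
  rw [tpow, Matrix.of_apply, Matrix.diagonal]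
  by_cases h : f = g
  · subst h
    simp [clockZ_apply']
  · rw [Matrix.of_apply, if_neg h]
    obtain ⟨i, hi⟩ := Function.ne_iff.mp h
    exact Finset.prod_eq_zero (Finset.mem_univ i) (by rw [clockZ_apply', if_neg hi])

end Aux

/-- Lemma 4, clock part. -/
theorem stmt3 (d N : ℕ) [NeZero d] (hd : 2 ≤ d) (hN : 1 ≤ N) (j k : ZMod d) :
    (tpow d N (clockZ d))ᴴ * coll d N (Smat d j k) * tpow d N (clockZ d) =
      (((zeta d ^ (k - j).val).re : ℂ)) • coll d N (Smat d j k) -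
      (((zeta d ^ (k - j).val).im : ℂ)) • coll d N (Amat d j k) := by
  rw [tpow_clockZ', Matrix.diagonal_conjTranspose]
  ext f g
  rw [Matrix.mul_diagonal, Matrix.diagonal_mul]
  simp only [Matrix.sub_apply, Matrix.smul_apply, smul_eq_mul, Pi.star_apply,
    coll, site, Matrix.sum_apply, Matrix.of_apply]
  rw [Finset.mul_sum, Finset.sum_mul, Finset.mul_sum, Finset.mul_sum, ← Finset.sum_sub_distrib]
  refine Finset.sum_congr rfl fun i _ => ?_
  by_cases hfg : ∀ l ∈ Finset.univ.erase i, f l = g l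
  · have hP : (∏ l ∈ Finset.univ.erase i, (if f l = g l then (1:ℂ) else 0)) = 1 :=
      Finset.prod_eq_one fun l hl => if_pos (hfg l hl)
    simp only [hP, mul_one]
    have hone : ∀ l ∈ Finset.univ.erase i,
        star (zeta d ^ (f l).val) * zeta d ^ (g l).val = 1 := by
      intro l hl
      rw [hfg l hl, zeta_key, sub_self, ZMod.val_zero, pow_zero]
    have hstar : star (∏ l : Fin N, zeta d ^ (f l).val) * (∏ l : Fin N, zeta d ^ (g l).val) =
        star (zeta d ^ (f i).val) * zeta d ^ (g i).val := by
      rw [star_prod, ← Finset.prod_mul_distrib,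
        ← Finset.mul_prod_erase Finset.univ _ (Finset.mem_univ i),
        Finset.prod_congr rfl hone, Finset.prod_const_one, mul_one]
    have hcore := zeta_core d j k (f i) (g i)
    linear_combination Smat d j k (f i) (g i) * hstar + hcore
  · push_neg at hfg
    obtain ⟨l, hl, hne⟩ := hfg
    have hP : (∏ l ∈ Finset.univ.erase i, (if f l = g l then (1:ℂ) else 0)) = 0 :=
      Finset.prod_eq_zero hl (if_neg hne)
    rw [hP]
    ring
end

section
/- (Lemma S2, symmetric part.) Let u : ZMod d → ℤ be an admissible content and let p ≠ q in ZMod d. Then S~^(p,q) |S_u⟩ = (u_p + 1)·|S_{u + e_p − e_q}⟩ + (u_q + 1)·|S_{u − e_p + e_q}⟩, where the integer coefficients are cast to ℂ. -/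
open Matrix Complex Finset

section Aux
variable {d N : ℕ} [NeZero d]

lemma site_mulVec (M : Matrix (ZMod d) (ZMod d) ℂ) (i : Fin N)
    (v : (Fin N → ZMod d) → ℂ) (g : Fin N → ZMod d) :
    (site d N M i *ᵥ v) g = ∑ a : ZMod d, M (g i) a * v (Function.update g i a) := by
  classical
  have key : ∀ f : Fin N → ZMod d,
      (∏ j ∈ Finset.univ.erase i, (if g j = f j then (1:ℂ) else 0)) =
        if f = Function.update g i (f i) then 1 else 0 := by
    intro f
    rw [Finset.prod_boole]
    congr 1
    simp only [eq_iff_iff]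
    constructor
    · intro h
      funext j
      by_cases hj : j = i
      · subst hj; simp
      · rw [Function.update_of_ne hj]
        exact (h j (Finset.mem_erase.2 ⟨hj, Finset.mem_univ j⟩)).symm
    · intro h j hj
      rw [h, Function.update_of_ne (Finset.mem_erase.1 hj).1]
  have h1 : (site d N M i *ᵥ v) g
      = ∑ f : Fin N → ZMod d, if f = Function.update g i (f i) then M (g i) (f i) * v f else 0 := by
    simp only [site, Matrix.mulVec, dotProduct, Matrix.of_apply]
    refine Finset.sum_congr rfl fun f _ => ?_
    rw [key]
    split <;> ring
  rw [h1, ← Finset.sum_filter]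
  refine Finset.sum_nbij' (fun f => f i) (fun a => Function.update g i a) ?_ ?_ ?_ ?_ ?_
  · intro f _; exact Finset.mem_univ _
  · intro a _
    simp only [Finset.mem_filter, Finset.mem_univ, true_and, Function.update_self]
  · intro f hf
    exact ((Finset.mem_filter.1 hf).2).symm
  · intro a _; exact Function.update_self i a g
  · intro f hf
    rw [← (Finset.mem_filter.1 hf).2]

omit [NeZero d] in
lemma count_update (g : Fin N → ZMod d) (i : Fin N) (a k : ZMod d) :
    ((Finset.univ.filter fun j => Function.update g i a j = k).card : ℤ) =
      ((Finset.univ.filter fun j => g j = k).card : ℤ)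
        + (if a = k then 1 else 0) - (if g i = k then 1 else 0) := by
  classical
  rw [Finset.card_filter, Finset.card_filter]
  push_cast
  rw [← Finset.add_sum_erase _ _ (Finset.mem_univ i), ← Finset.add_sum_erase _ _ (Finset.mem_univ i)]
  have hcongr : (∑ j ∈ Finset.univ.erase i, (if Function.update g i a j = k then (1:ℤ) else 0))
      = ∑ j ∈ Finset.univ.erase i, (if g j = k then (1:ℤ) else 0) := by
    refine Finset.sum_congr rfl fun j hj => ?_
    rw [Function.update_of_ne (Finset.mem_erase.1 hj).1]
  rw [hcongr]
  simp only [Function.update_self]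
  ring

lemma dicke_update (u : ZMod d → ℤ) (g : Fin N → ZMod d) (i : Fin N)
    (p q : ZMod d) (hg : g i = p) :
    dicke d N u (Function.update g i q) =
      dicke d N (u + Pi.single p 1 - Pi.single q 1) g := by
  unfold dicke
  refine if_congr (forall_congr' fun k => ?_) rfl rfl
  rw [count_update, hg]
  simp only [Pi.sub_apply, Pi.add_apply, Pi.single_apply]
  by_cases h1 : p = k <;> by_cases h2 : q = k <;> simp [h1, h2, eq_comm] <;> omega

end Aux

/-- Lemma S2, symmetric part. -/
theorem stmt5 (d N : ℕ) [NeZero d] (hd : 2 ≤ d) (hN : 1 ≤ N)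
    (u : ZMod d → ℤ) (hu : admissible d N u) (p q : ZMod d) (hpq : p ≠ q) :
    coll d N (Smat d p q) *ᵥ dicke d N u =
      ((u p + 1 : ℤ) : ℂ) • dicke d N (u + Pi.single p 1 - Pi.single q 1) +
      ((u q + 1 : ℤ) : ℂ) • dicke d N (u - Pi.single p 1 + Pi.single q 1) := by
  classical
  funext g
  have hqp : q ≠ p := hpq.symm
  set v1 : ZMod d → ℤ := u + Pi.single p 1 - Pi.single q 1 with hv1
  set v2 : ZMod d → ℤ := u - Pi.single p 1 + Pi.single q 1 with hv2
  have step1 : (coll d N (Smat d p q) *ᵥ dicke d N u) g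
      = ∑ i : Fin N, ∑ a : ZMod d, Smat d p q (g i) a * dicke d N u (Function.update g i a) := by
    rw [coll]
    have hsw : ((∑ i : Fin N, site d N (Smat d p q) i) *ᵥ dicke d N u) g
        = ∑ i : Fin N, (site d N (Smat d p q) i *ᵥ dicke d N u) g := by
      simp only [Matrix.mulVec, dotProduct, Matrix.sum_apply, Finset.sum_mul]
      exact Finset.sum_comm
    rw [hsw]
    exact Finset.sum_congr rfl fun i _ => site_mulVec _ _ _ _
  have inner : ∀ i : Fin N,
      (∑ a : ZMod d, Smat d p q (g i) a * dicke d N u (Function.update g i a))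
        = (if g i = p then dicke d N v1 g else 0) + (if g i = q then dicke d N v2 g else 0) := by
    intro i
    have expand : ∀ a : ZMod d, Smat d p q (g i) a * dicke d N u (Function.update g i a)
        = (if p = g i ∧ q = a then dicke d N u (Function.update g i a) else 0)
          + (if q = g i ∧ p = a then dicke d N u (Function.update g i a) else 0) := by
      intro a
      simp only [Smat, Matrix.add_apply, Matrix.single, Matrix.of_apply]
      split_ifs <;> ring
    rw [Finset.sum_congr rfl fun a _ => expand a, Finset.sum_add_distrib]
    have s1 : (∑ a : ZMod d, if p = g i ∧ q = a then dicke d N u (Function.update g i a) else 0)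
        = if g i = p then dicke d N v1 g else 0 := by
      by_cases h : p = g i
      · have hgi : g i = p := h.symm
        rw [if_pos hgi]
        have hred : ∀ a : ZMod d,
            (if p = g i ∧ q = a then dicke d N u (Function.update g i a) else 0)
              = if q = a then dicke d N u (Function.update g i a) else 0 := fun a => by
          simp [h]
        rw [Finset.sum_congr rfl fun a _ => hred a, Finset.sum_ite_eq,
          if_pos (Finset.mem_univ q)]
        exact dicke_update u g i p q hgi
      · simp only [h, false_and, if_false, Finset.sum_const_zero]
        rw [if_neg (fun hc => h hc.symm)]
    have s2 : (∑ a : ZMod d, if q = g i ∧ p = a then dicke d N u (Function.update g i a) else 0)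
        = if g i = q then dicke d N v2 g else 0 := by
      by_cases h : q = g i
      · have hgi : g i = q := h.symm
        rw [if_pos hgi]
        have hred : ∀ a : ZMod d,
            (if q = g i ∧ p = a then dicke d N u (Function.update g i a) else 0)
              = if p = a then dicke d N u (Function.update g i a) else 0 := fun a => by
          simp [h]
        rw [Finset.sum_congr rfl fun a _ => hred a, Finset.sum_ite_eq,
          if_pos (Finset.mem_univ p)]
        rw [dicke_update u g i q p hgi]
        congr 1
        rw [hv2]; ring
      · simp only [h, false_and, if_false, Finset.sum_const_zero]
        rw [if_neg (fun hc => h hc.symm)]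
    rw [s1, s2]
  rw [step1, Finset.sum_congr rfl fun i _ => inner i, Finset.sum_add_distrib]
  have c1 : (∑ i : Fin N, if g i = p then dicke d N v1 g else 0)
      = (((Finset.univ.filter fun i => g i = p).card : ℕ) : ℂ) * dicke d N v1 g := by
    rw [← Finset.sum_boole, Finset.sum_mul]
    refine Finset.sum_congr rfl fun i _ => ?_
    split <;> ring
  have c2 : (∑ i : Fin N, if g i = q then dicke d N v2 g else 0)
      = (((Finset.univ.filter fun i => g i = q).card : ℕ) : ℂ) * dicke d N v2 g := by
    rw [← Finset.sum_boole, Finset.sum_mul]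
    refine Finset.sum_congr rfl fun i _ => ?_
    split <;> ring
  rw [c1, c2]
  have f1 : (((Finset.univ.filter fun i => g i = p).card : ℕ) : ℂ) * dicke d N v1 g
      = ((u p + 1 : ℤ) : ℂ) * dicke d N v1 g := by
    by_cases h : ∀ k : ZMod d, ((Finset.univ.filter fun i => g i = k).card : ℤ) = v1 k
    · have hp := h p
      have hvp : v1 p = u p + 1 := by
        rw [hv1]
        simp [Pi.single_apply, hqp.symm]
      rw [hvp] at hp
      congr 1
      exact_mod_cast hp
    · have hz : dicke d N v1 g = 0 := by simp only [dicke, if_neg h]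
      rw [hz]; ring
  have f2 : (((Finset.univ.filter fun i => g i = q).card : ℕ) : ℂ) * dicke d N v2 g
      = ((u q + 1 : ℤ) : ℂ) * dicke d N v2 g := by
    by_cases h : ∀ k : ZMod d, ((Finset.univ.filter fun i => g i = k).card : ℤ) = v2 k
    · have hq := h q
      have hvq : v2 q = u q + 1 := by
        rw [hv2]
        simp [Pi.single_apply, hpq.symm]
      rw [hvq] at hq
      congr 1
      exact_mod_cast hq
    · have hz : dicke d N v2 g = 0 := by simp only [dicke, if_neg h]
      rw [hz]; ring
  rw [f1, f2]
  simp [Pi.add_apply, Pi.smul_apply, smul_eq_mul]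
end

section
/- (Lemma S2, diagonal part.) Let u : ZMod d → ℤ be an admissible content and let ℓ ∈ ZMod d. Then D~^(ℓ) |S_u⟩ = (u_ℓ − u_{ℓ+1})·|S_u⟩, where the integer coefficient is cast to ℂ. -/
open Matrix Complex Finset

lemma site_mulVec_diag (d N : ℕ) [NeZero d] (M : Matrix (ZMod d) (ZMod d) ℂ)
    (hM : ∀ p q, p ≠ q → M p q = 0) (i : Fin N) (v : (Fin N → ZMod d) → ℂ)
    (f : Fin N → ZMod d) :
    (site d N M i *ᵥ v) f = M (f i) (f i) * v f := by
  rw [Matrix.mulVec, dotProduct]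
  rw [Finset.sum_eq_single_of_mem f (Finset.mem_univ f)]
  · simp [site]
  · intro g _ hg
    by_cases hall : ∀ j, j ≠ i → f j = g j
    · have hfi : f i ≠ g i := by
        intro h
        apply hg
        funext j
        by_cases hj : j = i
        · subst hj; exact h.symm
        · exact (hall j hj).symm
      simp [site, hM _ _ hfi]
    · push_neg at hall
      obtain ⟨j, hj, hfg⟩ := hall
      simp only [site, Matrix.of_apply]
      rw [Finset.prod_eq_zero (Finset.mem_erase.mpr ⟨hj, Finset.mem_univ j⟩)
        (by simp [hfg])]
      ring

/-- Lemma S2, diagonal part. -/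
theorem stmt6 (d N : ℕ) [NeZero d] (hd : 2 ≤ d) (hN : 1 ≤ N)
    (u : ZMod d → ℤ) (hu : admissible d N u) (ℓ : ZMod d) :
    coll d N (Dmat d ℓ) *ᵥ dicke d N u =
      ((u ℓ - u (ℓ + 1) : ℤ) : ℂ) • dicke d N u := by
  have hDdiag : ∀ p q : ZMod d, p ≠ q → Dmat d ℓ p q = 0 := by
    intro p q hpq
    simp only [Dmat, Matrix.sub_apply, Matrix.single]
    aesop
  funext f
  have h1 : (coll d N (Dmat d ℓ) *ᵥ dicke d N u) f
      = ∑ i : Fin N, (site d N (Dmat d ℓ) i *ᵥ dicke d N u) f := by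
    simp only [coll, Matrix.mulVec, dotProduct, Matrix.sum_apply, Finset.sum_mul]
    rw [Finset.sum_comm]
  rw [h1]
  simp only [site_mulVec_diag d N _ hDdiag]
  rw [← Finset.sum_mul]
  have h2 : ∑ i : Fin N, Dmat d ℓ (f i) (f i)
      = ((Finset.univ.filter fun i => f i = ℓ).card : ℂ)
        - ((Finset.univ.filter fun i => f i = ℓ + 1).card : ℂ) := by
    have : ∀ i : Fin N, Dmat d ℓ (f i) (f i)
        = (if f i = ℓ then (1:ℂ) else 0) - (if f i = ℓ + 1 then (1:ℂ) else 0) := by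
      intro i
      simp only [Dmat, Matrix.sub_apply, Matrix.single]
      aesop
    simp only [this, Finset.sum_sub_distrib, Finset.sum_boole]
  rw [h2]
  simp only [Pi.smul_apply, smul_eq_mul, dicke]
  by_cases hf : ∀ k : ZMod d, ((Finset.univ.filter fun i => f i = k).card : ℤ) = u k
  · rw [if_pos hf]
    have hℓ := hf ℓ
    have hℓ1 := hf (ℓ + 1)
    rw [← hℓ, ← hℓ1]
    push_cast
    ring
  · rw [if_neg hf]
    ring
end

section
/- (Lemma S3, uniform form.) Let u : ZMod d → ℤ be an admissible content, let p ≠ q and r ≠ s in ZMod d, and let Γ, Υ each be one of the collective operators S~ or A~. Then Γ^(p,q) Υ^(r,s) |S_u⟩ lies in the ℂ-linear span of the four Dicke vectors |S_{u + ε₁(e_p − e_q) + ε₂(e_r − e_s)}⟩ for ε₁, ε₂ ∈ {+1, −1}. -/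
open Matrix Complex Finset

lemma coll_add (d N : ℕ) [NeZero d] (M M' : Matrix (ZMod d) (ZMod d) ℂ) :
    coll d N (M + M') = coll d N M + coll d N M' := by
  ext f g
  simp [coll, site, Matrix.sum_apply, add_mul, Finset.sum_add_distrib]

lemma coll_smul (d N : ℕ) [NeZero d] (c : ℂ) (M : Matrix (ZMod d) (ZMod d) ℂ) :
    coll d N (c • M) = c • coll d N M := by
  ext f g
  simp [coll, site, Matrix.sum_apply, Finset.mul_sum, mul_assoc]

lemma card_update {N d : ℕ} [NeZero d] {f : Fin N → ZMod d} {i : Fin N} {a b : ZMod d}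
    (hfi : f i = a) (hab : a ≠ b) (k : ZMod d) :
    ((Finset.univ.filter fun j => Function.update f i b j = k).card : ℤ)
      = ((Finset.univ.filter fun j => f j = k).card : ℤ)
        + (if k = b then 1 else 0) - (if k = a then 1 else 0) := by
  by_cases hkb : k = b
  · rw [hkb]
    have hba : b ≠ a := Ne.symm hab
    have hset : (Finset.univ.filter fun j => Function.update f i b j = b)
        = insert i (Finset.univ.filter fun j => f j = b) := by
      ext j
      by_cases hji : j = i
      · subst hji; simp [Function.update_self]
      · simp [Function.update_of_ne hji, hji]
    have hnot : i ∉ Finset.univ.filter fun j => f j = b := by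
      simp [hfi, hab]
    rw [hset, Finset.card_insert_of_notMem hnot]
    simp [hba]

  · by_cases hka : k = a
    · rw [hka]
      have hset : (Finset.univ.filter fun j => Function.update f i b j = a)
          = (Finset.univ.filter fun j => f j = a).erase i := by
        ext j
        by_cases hji : j = i
        · subst hji; simp [Function.update_self, Ne.symm hab]
        · simp [Function.update_of_ne hji, hji]
      have hmem : i ∈ Finset.univ.filter fun j => f j = a := by simp [hfi]
      rw [hset, Finset.card_erase_of_mem hmem]
      have h1 : 1 ≤ (Finset.univ.filter fun j => f j = a).card :=
        Finset.card_pos.mpr ⟨i, hmem⟩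
      rw [Nat.cast_sub h1]
      simp [hab]
    · have hset : (Finset.univ.filter fun j => Function.update f i b j = k)
          = Finset.univ.filter fun j => f j = k := by
        ext j
        by_cases hji : j = i
        · subst hji
          simp only [Finset.mem_filter, Finset.mem_univ, true_and,
            Function.update_self, hfi]
          exact iff_of_false (fun h => hkb h.symm) (fun h => hka h.symm)
        · simp [Function.update_of_ne hji]
      rw [hset]; simp [hka, hkb]
lemma coll_unit_mulVec_dicke (d N : ℕ) [NeZero d] {a b : ZMod d} (hab : a ≠ b)
    (u : ZMod d → ℤ) :
    coll d N (Matrix.single a b 1) *ᵥ dicke d N u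
      = ((u a : ℂ) + 1) • dicke d N (u + (Pi.single a 1 - Pi.single b 1)) := by
  funext f
  have hstep : ∀ i : Fin N,
      ∑ g : Fin N → ZMod d, site d N (Matrix.single a b 1) i f g * dicke d N u g
        = if f i = a then dicke d N u (Function.update f i b) else 0 := by
    intro i
    rw [Finset.sum_eq_single_of_mem (Function.update f i b) (Finset.mem_univ _)]
    · have h1 : (∏ j ∈ Finset.univ.erase i, if f j = Function.update f i b j then (1:ℂ) else 0) = 1 := by
        apply Finset.prod_eq_one
        intro j hj
        rw [Function.update_of_ne (Finset.mem_erase.mp hj).1]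
        simp
      simp only [site, Matrix.of_apply, h1, Function.update_self, mul_one,
        Matrix.single, and_true]
      by_cases h : f i = a
      · rw [if_pos h.symm, if_pos h, one_mul]
      · rw [if_neg (fun hh => h hh.symm), if_neg h, zero_mul]
    · intro g _ hg
      by_cases hgi : g i = b
      · have hex : ∃ j, j ≠ i ∧ f j ≠ g j := by
          by_contra hcon
          push_neg at hcon
          apply hg
          funext j
          by_cases hji : j = i
          · subst hji; rw [hgi, Function.update_self]
          · rw [Function.update_of_ne hji]; exact (hcon j hji).symm
        obtain ⟨j, hji, hgj⟩ := hex
        have hz : (∏ j ∈ Finset.univ.erase i, if f j = g j then (1:ℂ) else 0) = 0 := by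
          apply Finset.prod_eq_zero (Finset.mem_erase.mpr ⟨hji, Finset.mem_univ j⟩)
          simp [hgj]
        simp [site, hz]
      · have hM : Matrix.single a b (1:ℂ) (f i) (g i) = 0 := by
          simp only [Matrix.single, Matrix.of_apply]
          exact if_neg (by rintro ⟨-, h2⟩; exact hgi h2.symm)
        simp [site, hM]
  have hL : (coll d N (Matrix.single a b 1) *ᵥ dicke d N u) f
      = ∑ i : Fin N, (if f i = a then dicke d N u (Function.update f i b) else 0) := by
    simp only [coll, Matrix.mulVec, dotProduct, Matrix.sum_apply, Finset.sum_mul]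
    rw [Finset.sum_comm]
    exact Finset.sum_congr rfl fun i _ => hstep i
  rw [hL]
  set u' : ZMod d → ℤ := u + (Pi.single a 1 - Pi.single b 1) with hu'
  by_cases hf : ∀ k : ZMod d,
      ((Finset.univ.filter fun i => f i = k).card : ℤ) = u' k
  · have hterm : ∀ i : Fin N, (if f i = a then dicke d N u (Function.update f i b) else 0)
        = (if f i = a then 1 else 0) := by
      intro i
      by_cases h : f i = a
      · have hd1 : dicke d N u (Function.update f i b) = 1 := by
          rw [dicke]
          rw [if_pos]
          intro k
          rw [card_update h hab k]
          have hk := hf k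
          simp only [hu', Pi.add_apply, Pi.sub_apply, Pi.single_apply] at hk
          split_ifs at hk ⊢ <;> omega
        simp [h, hd1]
      · simp [h]
    rw [Finset.sum_congr rfl fun i _ => hterm i, Finset.sum_boole]
    have hd1 : dicke d N u' f = 1 := by
      rw [dicke, if_pos hf]
    have hca : ((Finset.univ.filter fun i => f i = a).card : ℤ) = u a + 1 := by
      have := hf a
      simp only [hu', Pi.add_apply, Pi.sub_apply, Pi.single_apply, if_pos rfl] at this
      rw [this]
      simp [fun h : a = b => hab h]
    simp only [Pi.smul_apply, hd1, smul_eq_mul, mul_one]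
    exact_mod_cast congrArg (Int.cast : ℤ → ℂ) hca
  · have hd0 : dicke d N u' f = 0 := by
      rw [dicke, if_neg hf]
    simp only [Pi.smul_apply, hd0, smul_eq_mul, mul_zero]
    apply Finset.sum_eq_zero
    intro i _
    by_cases h : f i = a
    · have hd0' : dicke d N u (Function.update f i b) = 0 := by
        rw [dicke, if_neg]
        intro hall
        apply hf
        intro k
        have hk := hall k
        rw [card_update h hab k] at hk
        simp only [hu', Pi.add_apply, Pi.sub_apply, Pi.single_apply]
        split_ifs at hk ⊢ <;> omega
      simp [h, hd0']
    · simp [h]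
/-- Lemma S3, uniform form. -/
theorem stmt7 (d N : ℕ) [NeZero d] (hd : 2 ≤ d) (hN : 1 ≤ N)
    (u : ZMod d → ℤ) (hu : admissible d N u)
    (p q r s : ZMod d) (hpq : p ≠ q) (hrs : r ≠ s)
    (Γ Υ : Matrix (ZMod d) (ZMod d) ℂ)
    (hΓ : Γ = Smat d p q ∨ Γ = Amat d p q)
    (hΥ : Υ = Smat d r s ∨ Υ = Amat d r s) :
    (coll d N Γ * coll d N Υ) *ᵥ dicke d N u ∈
      Submodule.span ℂ
        {w : (Fin N → ZMod d) → ℂ | ∃ ε₁ ε₂ : ℤ,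
          (ε₁ = 1 ∨ ε₁ = -1) ∧ (ε₂ = 1 ∨ ε₂ = -1) ∧
          w = dicke d N (u + ε₁ • (Pi.single p 1 - Pi.single q 1)
                           + ε₂ • (Pi.single r 1 - Pi.single s 1))} := by
  set S := Submodule.span ℂ
        {w : (Fin N → ZMod d) → ℂ | ∃ ε₁ ε₂ : ℤ,
          (ε₁ = 1 ∨ ε₁ = -1) ∧ (ε₂ = 1 ∨ ε₂ = -1) ∧
          w = dicke d N (u + ε₁ • (Pi.single p 1 - Pi.single q 1)
                           + ε₂ • (Pi.single r 1 - Pi.single s 1))} with hS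
  obtain ⟨c1, c2, hΓ'⟩ : ∃ c1 c2 : ℂ,
      Γ = c1 • Matrix.single p q 1 + c2 • Matrix.single q p 1 := by
    rcases hΓ with h | h
    · exact ⟨1, 1, by simp [h, Smat]⟩
    · exact ⟨-Complex.I, Complex.I, by simp [h, Amat]⟩
  obtain ⟨c3, c4, hΥ'⟩ : ∃ c3 c4 : ℂ,
      Υ = c3 • Matrix.single r s 1 + c4 • Matrix.single s r 1 := by
    rcases hΥ with h | h
    · exact ⟨1, 1, by simp [h, Smat]⟩
    · exact ⟨-Complex.I, Complex.I, by simp [h, Amat]⟩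
  have hmem : ∀ (ε₁ ε₂ : ℤ), (ε₁ = 1 ∨ ε₁ = -1) → (ε₂ = 1 ∨ ε₂ = -1) →
      ∀ v : ZMod d → ℤ,
      v = u + ε₁ • (Pi.single p 1 - Pi.single q 1) + ε₂ • (Pi.single r 1 - Pi.single s 1) →
      dicke d N v ∈ S := by
    intro ε₁ ε₂ h1 h2 v hv
    exact Submodule.subset_span ⟨ε₁, ε₂, h1, h2, by rw [hv]⟩
  have hG : ∀ w : ZMod d → ℤ, coll d N Γ *ᵥ dicke d N w
      = c1 • (((w p : ℂ) + 1) • dicke d N (w + (Pi.single p 1 - Pi.single q 1)))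
        + c2 • (((w q : ℂ) + 1) • dicke d N (w + (Pi.single q 1 - Pi.single p 1))) := by
    intro w
    rw [hΓ', coll_add, coll_smul, coll_smul, Matrix.add_mulVec,
      Matrix.smul_mulVec, Matrix.smul_mulVec,
      coll_unit_mulVec_dicke d N hpq w, coll_unit_mulVec_dicke d N hpq.symm w]
  have hU : coll d N Υ *ᵥ dicke d N u
      = c3 • (((u r : ℂ) + 1) • dicke d N (u + (Pi.single r 1 - Pi.single s 1)))
        + c4 • (((u s : ℂ) + 1) • dicke d N (u + (Pi.single s 1 - Pi.single r 1))) := by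
    rw [hΥ', coll_add, coll_smul, coll_smul, Matrix.add_mulVec,
      Matrix.smul_mulVec, Matrix.smul_mulVec,
      coll_unit_mulVec_dicke d N hrs u, coll_unit_mulVec_dicke d N hrs.symm u]
  rw [← Matrix.mulVec_mulVec, hU, Matrix.mulVec_add, Matrix.mulVec_smul, Matrix.mulVec_smul,
    Matrix.mulVec_smul, Matrix.mulVec_smul, hG, hG]
  have m1 : dicke d N (u + (Pi.single r 1 - Pi.single s 1) + (Pi.single p 1 - Pi.single q 1)) ∈ S :=
    hmem 1 1 (Or.inl rfl) (Or.inl rfl) _ (by simp only [one_smul]; abel)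
  have m2 : dicke d N (u + (Pi.single r 1 - Pi.single s 1) + (Pi.single q 1 - Pi.single p 1)) ∈ S :=
    hmem (-1) 1 (Or.inr rfl) (Or.inl rfl) _ (by simp only [one_smul, neg_smul, neg_sub]; abel)
  have m3 : dicke d N (u + (Pi.single s 1 - Pi.single r 1) + (Pi.single p 1 - Pi.single q 1)) ∈ S :=
    hmem 1 (-1) (Or.inl rfl) (Or.inr rfl) _ (by simp only [one_smul, neg_smul, neg_sub]; abel)
  have m4 : dicke d N (u + (Pi.single s 1 - Pi.single r 1) + (Pi.single q 1 - Pi.single p 1)) ∈ S :=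
    hmem (-1) (-1) (Or.inr rfl) (Or.inr rfl) _ (by simp only [neg_smul, neg_sub]; abel)
  apply Submodule.add_mem <;> apply Submodule.smul_mem <;> apply Submodule.smul_mem <;>
    apply Submodule.add_mem <;> apply Submodule.smul_mem <;> apply Submodule.smul_mem <;>
    assumption
end

section
/- Let k be an integer and let v be a ℂ-linear combination of Dicke vectors |S_u⟩ over admissible contents u whose weight Σ_{m=0}^{d−1} m·u_m is congruent to k modulo d. Then for every n ∈ ZMod d with n ≠ 0, ⟨v| S~^(0,n) |v⟩ = 0. -/
open Matrix Complex Finset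

/-- The content of a configuration f. -/
noncomputable def cont (d N : ℕ) [NeZero d] (f : Fin N → ZMod d) : ZMod d → ℤ :=
  fun k => ((Finset.univ.filter fun i => f i = k).card : ℤ)

lemma cweight_cont (d N : ℕ) [NeZero d] (f : Fin N → ZMod d) :
    cweight d (cont d N f) = ∑ i : Fin N, ((f i).val : ℤ) := by
  rw [← Finset.sum_fiberwise_of_maps_to (g := fun i => (f i).val) (t := Finset.range d)
    (fun i _ => Finset.mem_range.mpr (ZMod.val_lt _)) (fun i => ((f i).val : ℤ))]
  unfold cweight cont
  refine Finset.sum_congr rfl fun m hm => ?_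
  have hmd : m < d := Finset.mem_range.mp hm
  have hfilter : (Finset.univ.filter fun i => f i = ((m : ℕ) : ZMod d)) =
      (Finset.univ.filter fun i => (f i).val = m) := by
    apply Finset.filter_congr
    intro i _
    constructor
    · intro h; rw [h]; exact ZMod.val_cast_of_lt hmd
    · intro h; rw [← h, ZMod.natCast_val, ZMod.cast_id]
  rw [hfilter]
  have : ∑ i ∈ Finset.univ.filter (fun i => (f i).val = m), ((f i).val : ℤ)
      = ∑ _i ∈ Finset.univ.filter (fun i => (f i).val = m), (m : ℤ) := by
    refine Finset.sum_congr rfl fun i hi => ?_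
    have := (Finset.mem_filter.mp hi).2
    exact_mod_cast congrArg (Nat.cast : ℕ → ℤ) this
  rw [this, Finset.sum_const, nsmul_eq_mul, mul_comm]

theorem stmt11 (d N : ℕ) [NeZero d] (hd : 2 ≤ d) (hN : 1 ≤ N)
    (k : ℤ) (β : (ZMod d → ℤ) →₀ ℂ)
    (hβ : ∀ u ∈ β.support, admissible d N u ∧ cweight d u ≡ k [ZMOD (d : ℤ)])
    (v : (Fin N → ZMod d) → ℂ) (hv : v = β.sum fun u c => c • dicke d N u)
    (n : ZMod d) (hn : n ≠ 0) :
    qinner d N v (coll d N (Smat d 0 n) *ᵥ v) = 0 := by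
  have hvsupp : ∀ f : Fin N → ZMod d, v f ≠ 0 → cont d N f ∈ β.support := by
    intro f hf
    by_contra hns
    apply hf
    rw [hv]
    simp only [Finsupp.sum, Finset.sum_apply, Pi.smul_apply, smul_eq_mul]
    apply Finset.sum_eq_zero
    intro u hu
    have hz : dicke d N u f = 0 := by
      by_contra hne
      have hu' : u = cont d N f := by
        unfold dicke at hne
        split at hne
        · next h => funext kk; exact (h kk).symm
        · exact absurd rfl hne
      exact hns (hu' ▸ hu)
    rw [hz, mul_zero]
  have key : ∀ f g : Fin N → ZMod d, v f ≠ 0 → v g ≠ 0 →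
      coll d N (Smat d 0 n) f g = 0 := by
    intro f g hf hg
    unfold coll
    rw [Matrix.sum_apply]
    apply Finset.sum_eq_zero
    intro i _
    by_contra hsite
    simp only [site, Matrix.of_apply] at hsite
    have hSne : Smat d 0 n (f i) (g i) ≠ 0 := left_ne_zero_of_mul hsite
    have hprod : (∏ j ∈ Finset.univ.erase i, if f j = g j then (1:ℂ) else 0) ≠ 0 :=
      right_ne_zero_of_mul hsite
    have hoff : ∀ j, j ≠ i → f j = g j := by
      intro j hj
      by_contra hne
      apply hprod
      apply Finset.prod_eq_zero (Finset.mem_erase.mpr ⟨hj, Finset.mem_univ j⟩)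
      simp [hne]
    have h1 := (hβ _ (hvsupp f hf)).2
    have h2 := (hβ _ (hvsupp g hg)).2
    have hcw : cweight d (cont d N f) ≡ cweight d (cont d N g) [ZMOD (d : ℤ)] :=
      h1.trans h2.symm
    rw [cweight_cont, cweight_cont] at hcw
    have hsplitf : ∑ j : Fin N, ((f j).val : ℤ)
        = ((f i).val : ℤ) + ∑ j ∈ Finset.univ.erase i, ((f j).val : ℤ) :=
      (Finset.add_sum_erase _ _ (Finset.mem_univ i)).symm
    have hsplitg : ∑ j : Fin N, ((g j).val : ℤ)
        = ((g i).val : ℤ) + ∑ j ∈ Finset.univ.erase i, ((g j).val : ℤ) :=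
      (Finset.add_sum_erase _ _ (Finset.mem_univ i)).symm
    rw [hsplitf, hsplitg] at hcw
    have htail : ∑ j ∈ Finset.univ.erase i, ((f j).val : ℤ)
        = ∑ j ∈ Finset.univ.erase i, ((g j).val : ℤ) :=
      Finset.sum_congr rfl fun j hj => by rw [hoff j (Finset.mem_erase.mp hj).1]
    rw [htail] at hcw
    have hmod : ((f i).val : ℤ) ≡ ((g i).val : ℤ) [ZMOD (d : ℤ)] :=
      hcw.add_right_cancel' _
    have heq : f i = g i := by
      have hc : ((((f i).val : ℤ)) : ZMod d) = ((((g i).val : ℤ)) : ZMod d) :=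
        (ZMod.intCast_eq_intCast_iff _ _ _).mpr hmod
      push_cast at hc
      simpa [ZMod.natCast_val, ZMod.cast_id] using hc
    apply hSne
    unfold Smat
    rw [heq]
    simp only [Matrix.add_apply, Matrix.single, Matrix.of_apply]
    rw [if_neg, if_neg, add_zero]
    · rintro ⟨ha, hb⟩; exact hn (ha.trans hb.symm ▸ rfl)
    · rintro ⟨ha, hb⟩; exact hn (hb.trans ha.symm ▸ rfl)
  unfold qinner
  apply Finset.sum_eq_zero
  intro f _
  rcases eq_or_ne (v f) 0 with h | h
  · rw [h]; simp
  · have hz : (coll d N (Smat d 0 n) *ᵥ v) f = 0 := by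
      simp only [Matrix.mulVec, dotProduct]
      apply Finset.sum_eq_zero
      intro g _
      rcases eq_or_ne (v g) 0 with h' | h'
      · rw [h', mul_zero]
      · rw [key f g h h', zero_mul]
    rw [hz, mul_zero]
end

section
/- (Theorem 5.) Let d ≥ 3 be odd and N ≥ 1. Let (|k̄⟩)_{k∈ZMod d} be N-qudit vectors such that: (i) ⟨ī|j̄⟩ equals 1 if i = j and 0 otherwise; (ii) |k̄⟩ = X̄^k |0̄⟩ for every k; (iii) each |k̄⟩ is a ℂ-linear combination of Dicke vectors |S_u⟩ over admissible contents u whose weight Σ_{m=0}^{d−1} m·u_m is congruent to k modulo d; (iv) for every ℓ, j ∈ ZMod d, the vector D~^(ℓ)|j̄⟩ lies in the ℂ-span of {|k̄⟩ : k ∈ ZMod d}. Assume: (C1) ⟨ī| S~^(0,n) |j̄⟩ = 0 for all i ≠ j in ZMod d and all natural numbers n with 1 ≤ n ≤ (d−1)/2 (n read in ZMod d); (C2) for every Γ, Υ ∈ {S~, A~} and all natural numbers 0 ≤ p < q ≤ d−1 and 0 ≤ r < s ≤ d−1 (indices read in ZMod d) there is a constant c ∈ ℂ with ⟨ī| Γ^(p,q)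 Υ^(r,s) |j̄⟩ = c if i = j and 0 if i ≠ j, for all i, j; (C3) ⟨k̄| D~^(d−2) |k̄⟩ takes the same value for all k ∈ ZMod d; (C4) for every natural number 0 ≤ ℓ ≤ d−2, ⟨k̄| D~^(ℓ) D~^(d−2) |k̄⟩ takes the same value for all k ∈ ZMod d. Let E be the set of collective operators {S~^(p,q), A~^(p,q) : 0 ≤ p < q ≤ d−1} ∪ {D~^(ℓ) : 0 ≤ ℓ ≤ d−2}. Then for all E, F ∈ E there exist constants c_E, c_{E,F} ∈ ℂ such that ⟨ī| E |j̄⟩ = c_E·δ_{ij} and ⟨ī| E F |j̄⟩ = c_{E,F}·δ_{ij} for all i, j ∈ ZMod d. -/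
open Matrix Complex Finset

namespace St15
variable {d N : ℕ} [NeZero d]

lemma shiftX_apply (a b : ZMod d) : shiftX d a b = if a = b + 1 then 1 else 0 := by
  unfold shiftX
  rw [Matrix.sum_apply]
  have h : ∀ p : ZMod d, Matrix.single (p + 1) p (1:ℂ) a b
      = if p = b then (if a = b + 1 then (1:ℂ) else 0) else 0 := by
    intro p
    by_cases h : p = b
    · subst h; simp [Matrix.single, eq_comm]
    · simp only [Matrix.single, Matrix.of_apply, if_neg h]
      rw [if_neg]
      rintro ⟨-, hb⟩; exact h hb
  rw [Finset.sum_congr rfl fun p _ => h p, Finset.sum_ite_eq' Finset.univ b,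
    if_pos (Finset.mem_univ b)]

lemma tpow_shiftX_mulVec (v : (Fin N → ZMod d) → ℂ) (f : Fin N → ZMod d) :
    (tpow d N (shiftX d) *ᵥ v) f = v (fun i => f i - 1) := by
  have key : ∀ g : Fin N → ZMod d,
      tpow d N (shiftX d) f g = if (fun i => f i - 1) = g then (1:ℂ) else 0 := by
    intro g
    by_cases h : (fun i : Fin N => f i - 1) = g
    · rw [if_pos h]
      have : ∀ i, f i = g i + 1 := fun i => by
        rw [← congrFun h i]; ring
      simp [tpow, shiftX_apply, this]
    · rw [if_neg h]
      obtain ⟨i, hi⟩ : ∃ i, f i - 1 ≠ g i := by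
        by_contra hc
        push_neg at hc
        exact h (funext hc)
      have : f i ≠ g i + 1 := fun hx => hi (by rw [hx]; ring)
      exact Finset.prod_eq_zero (Finset.mem_univ i) (by simp [shiftX_apply, this])
  unfold Matrix.mulVec dotProduct
  simp only [key, ite_mul, one_mul, zero_mul]
  rw [Finset.sum_ite_eq Finset.univ]
  simp

lemma tpow_shiftX_pow_mulVec (m : ℕ) (v : (Fin N → ZMod d) → ℂ) (f : Fin N → ZMod d) :
    ((tpow d N (shiftX d)) ^ m *ᵥ v) f = v (fun i => f i - m) := by
  induction m generalizing f with
  | zero => simp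
  | succ m ih =>
    rw [pow_succ', ← Matrix.mulVec_mulVec, tpow_shiftX_mulVec]
    rw [ih]
    congr 1
    funext i
    push_cast
    ring

end St15
namespace St15
variable {d N : ℕ} [NeZero d] {bar : ZMod d → (Fin N → ZMod d) → ℂ}

lemma bar_apply (hX : ∀ k : ZMod d, bar k = (tpow d N (shiftX d)) ^ k.val *ᵥ bar 0)
    (k : ZMod d) (f : Fin N → ZMod d) : bar k f = bar 0 (fun i => f i - k) := by
  rw [hX k, tpow_shiftX_pow_mulVec]
  simp [ZMod.natCast_val, ZMod.cast_id]

/-- shift of a vector: (shiftVec t v) f = v (f - t). -/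
def shiftVec (t : ZMod d) (v : (Fin N → ZMod d) → ℂ) : (Fin N → ZMod d) → ℂ :=
  fun f => v (fun s => f s - t)

lemma qinner_shiftVec (t : ZMod d) (v w : (Fin N → ZMod d) → ℂ) :
    qinner d N (shiftVec t v) (shiftVec t w) = qinner d N v w := by
  unfold qinner shiftVec
  apply Fintype.sum_equiv (Equiv.subRight ((fun _ => t) : Fin N → ZMod d))
  intro f
  rfl

lemma shiftVec_bar (hX : ∀ k : ZMod d, bar k = (tpow d N (shiftX d)) ^ k.val *ᵥ bar 0)
    (t k : ZMod d) : bar (k + t) = shiftVec t (bar k) := by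
  funext f
  rw [bar_apply hX (k + t) f]
  show _ = bar k (fun s => f s - t)
  rw [bar_apply hX k]
  congr 1
  funext s
  ring

/-- shift of a one-site matrix. -/
def shiftSmall (t : ZMod d) (M : Matrix (ZMod d) (ZMod d) ℂ) : Matrix (ZMod d) (ZMod d) ℂ :=
  Matrix.of fun a b => M (a - t) (b - t)

lemma coll_shiftSmall_apply (t : ZMod d) (M : Matrix (ZMod d) (ZMod d) ℂ)
    (f g : Fin N → ZMod d) :
    coll d N (shiftSmall t M) (fun s => f s + t) (fun s => g s + t) = coll d N M f g := by
  unfold coll site shiftSmall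
  rw [Matrix.sum_apply, Matrix.sum_apply]
  apply Finset.sum_congr rfl
  intro s _
  simp

lemma coll_shiftSmall_apply' (t : ZMod d) (M : Matrix (ZMod d) (ZMod d) ℂ)
    (f g : Fin N → ZMod d) :
    coll d N (shiftSmall t M) f g = coll d N M (fun s => f s - t) (fun s => g s - t) := by
  have h := coll_shiftSmall_apply (N := N) t M (fun s => f s - t) (fun s => g s - t)
  simp only [sub_add_cancel] at h
  exact h.symm ▸ rfl

lemma coll_mulVec_shiftVec (t : ZMod d) (M : Matrix (ZMod d) (ZMod d) ℂ)
    (v : (Fin N → ZMod d) → ℂ) :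
    coll d N (shiftSmall t M) *ᵥ (shiftVec t v) = shiftVec t (coll d N M *ᵥ v) := by
  funext f
  show ∑ g, coll d N (shiftSmall t M) f g * shiftVec t v g
      = ∑ g, coll d N M (fun s => f s - t) g * v g
  apply Fintype.sum_equiv (Equiv.subRight ((fun _ => t) : Fin N → ZMod d))
  intro g
  rw [coll_shiftSmall_apply']
  rfl

lemma qinner_cov (hX : ∀ k : ZMod d, bar k = (tpow d N (shiftX d)) ^ k.val *ᵥ bar 0)
    (M : Matrix (ZMod d) (ZMod d) ℂ) (t i j : ZMod d) :
    qinner d N (bar i) (coll d N M *ᵥ bar j)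
      = qinner d N (bar (i + t)) (coll d N (shiftSmall t M) *ᵥ bar (j + t)) := by
  rw [shiftVec_bar hX t i, shiftVec_bar hX t j, coll_mulVec_shiftVec, qinner_shiftVec]

lemma qinner_cov2 (hX : ∀ k : ZMod d, bar k = (tpow d N (shiftX d)) ^ k.val *ᵥ bar 0)
    (M M' : Matrix (ZMod d) (ZMod d) ℂ) (t i j : ZMod d) :
    qinner d N (bar i) ((coll d N M * coll d N M') *ᵥ bar j)
      = qinner d N (bar (i + t))
          ((coll d N (shiftSmall t M) * coll d N (shiftSmall t M')) *ᵥ bar (j + t)) := by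
  rw [← Matrix.mulVec_mulVec, ← Matrix.mulVec_mulVec, shiftVec_bar hX t i, shiftVec_bar hX t j,
    coll_mulVec_shiftVec, coll_mulVec_shiftVec, qinner_shiftVec]

lemma shiftSmall_std (t a b : ZMod d) (c : ℂ) :
    shiftSmall t (Matrix.single a b c) = Matrix.single (a + t) (b + t) c := by
  ext x y
  simp only [shiftSmall, Matrix.of_apply, Matrix.single, eq_sub_iff_add_eq]

lemma shiftSmall_add (t : ZMod d) (M M' : Matrix (ZMod d) (ZMod d) ℂ) :
    shiftSmall t (M + M') = shiftSmall t M + shiftSmall t M' := rfl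

lemma shiftSmall_sub (t : ZMod d) (M M' : Matrix (ZMod d) (ZMod d) ℂ) :
    shiftSmall t (M - M') = shiftSmall t M - shiftSmall t M' := rfl

lemma shiftSmall_smul (t : ZMod d) (c : ℂ) (M : Matrix (ZMod d) (ZMod d) ℂ) :
    shiftSmall t (c • M) = c • shiftSmall t M := rfl

lemma shiftSmall_Smat (t a b : ZMod d) :
    shiftSmall t (Smat d a b) = Smat d (a + t) (b + t) := by
  unfold Smat
  rw [shiftSmall_add, shiftSmall_std, shiftSmall_std]

lemma shiftSmall_Amat (t a b : ZMod d) :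
    shiftSmall t (Amat d a b) = Amat d (a + t) (b + t) := by
  unfold Amat
  rw [shiftSmall_add, shiftSmall_smul, shiftSmall_smul, shiftSmall_std, shiftSmall_std]

lemma shiftSmall_Dmat (t ℓ : ZMod d) :
    shiftSmall t (Dmat d ℓ) = Dmat d (ℓ + t) := by
  unfold Dmat
  rw [shiftSmall_sub, shiftSmall_std, shiftSmall_std, add_right_comm]

end St15
namespace St15
variable {d N : ℕ} [NeZero d] {bar : ZMod d → (Fin N → ZMod d) → ℂ}

/-- total weight of a configuration -/
def W {d N : ℕ} (f : Fin N → ZMod d) : ZMod d := ∑ i, f i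

lemma cweight_cast (u : ZMod d → ℤ) :
    ((cweight d u : ℤ) : ZMod d) = ∑ c : ZMod d, c * ((u c : ℤ) : ZMod d) := by
  unfold cweight
  push_cast
  apply Finset.sum_nbij' (i := fun m => ((m : ℕ) : ZMod d)) (j := fun c => (c : ZMod d).val)
  · intro a _; exact Finset.mem_univ _
  · intro c _; exact Finset.mem_range.mpr (ZMod.val_lt c)
  · intro a ha; simp [ZMod.val_natCast_of_lt (Finset.mem_range.mp ha)]
  · intro c _; simp [ZMod.natCast_val, ZMod.cast_id]
  · intro a _; simp

lemma dicke_weight (u : ZMod d → ℤ) (k : ZMod d)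
    (hw : cweight d u ≡ (k.val : ℤ) [ZMOD (d : ℤ)]) (f : Fin N → ZMod d)
    (hf : W f ≠ k) : dicke d N u f = 0 := by
  unfold dicke
  rw [if_neg]
  intro hcount
  apply hf
  have h1 : W f = ∑ c : ZMod d, ∑ i ∈ Finset.univ.filter (fun i => f i = c), f i :=
    (Finset.sum_fiberwise _ _ _).symm
  have h2 : ∀ c : ZMod d, ∑ i ∈ Finset.univ.filter (fun i => f i = c), f i
      = ((Finset.univ.filter (fun i => f i = c)).card : ZMod d) * c := by
    intro c
    rw [Finset.sum_congr rfl (fun i hi => (Finset.mem_filter.mp hi).2), Finset.sum_const,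
      nsmul_eq_mul]
  have h3 : ∀ c : ZMod d, ((Finset.univ.filter (fun i => f i = c)).card : ZMod d)
      = ((u c : ℤ) : ZMod d) := by
    intro c
    have := hcount c
    have : (((Finset.univ.filter (fun i => f i = c)).card : ℤ) : ZMod d) = ((u c : ℤ) : ZMod d) := by
      rw [this]
    simpa using this
  have h4 : W f = ((cweight d u : ℤ) : ZMod d) := by
    rw [h1, cweight_cast]
    apply Finset.sum_congr rfl
    intro c _
    rw [h2 c, h3 c, mul_comm]
  rw [h4, (ZMod.intCast_eq_intCast_iff _ _ _).mpr hw]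
  simp [ZMod.natCast_val, ZMod.cast_id]

/-- vectors supported on weight class k -/
noncomputable def wsupp (d N : ℕ) [NeZero d] (k : ZMod d) : Submodule ℂ ((Fin N → ZMod d) → ℂ) where
  carrier := {v | ∀ f, W f ≠ k → v f = 0}
  add_mem' := by intro a b ha hb f hf; simp only [Pi.add_apply, ha f hf, hb f hf, add_zero]
  zero_mem' := by intro f _; rfl
  smul_mem' := by intro c v hv f hf; simp only [Pi.smul_apply, hv f hf, smul_zero]

lemma bar_supp (hW : ∀ k : ZMod d, bar k ∈
      Submodule.span ℂ {w : (Fin N → ZMod d) → ℂ | ∃ u : ZMod d → ℤ,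
        admissible d N u ∧ cweight d u ≡ (k.val : ℤ) [ZMOD (d : ℤ)] ∧ w = dicke d N u})
    (k : ZMod d) (f : Fin N → ZMod d) (hf : W f ≠ k) : bar k f = 0 := by
  have hle : Submodule.span ℂ {w : (Fin N → ZMod d) → ℂ | ∃ u : ZMod d → ℤ,
      admissible d N u ∧ cweight d u ≡ (k.val : ℤ) [ZMOD (d : ℤ)] ∧ w = dicke d N u}
      ≤ wsupp d N k := by
    rw [Submodule.span_le]
    rintro w ⟨u, -, hcw, rfl⟩
    intro g hg
    exact dicke_weight u k hcw g hg
  exact hle (hW k) f hf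

end St15
namespace St15
variable {d N : ℕ} [NeZero d] {bar : ZMod d → (Fin N → ZMod d) → ℂ}

lemma coll_apply (M : Matrix (ZMod d) (ZMod d) ℂ) (f g : Fin N → ZMod d) :
    coll d N M f g = ∑ s : Fin N,
      M (f s) (g s) * ∏ j ∈ Finset.univ.erase s, (if f j = g j then (1:ℂ) else 0) := by
  unfold coll site
  rw [Matrix.sum_apply]
  rfl

lemma coll_add (M M' : Matrix (ZMod d) (ZMod d) ℂ) :
    coll d N (M + M') = coll d N M + coll d N M' := by
  ext f g
  rw [Matrix.add_apply, coll_apply, coll_apply, coll_apply, ← Finset.sum_add_distrib]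
  apply Finset.sum_congr rfl
  intro s _
  rw [Matrix.add_apply, add_mul]

lemma coll_sub (M M' : Matrix (ZMod d) (ZMod d) ℂ) :
    coll d N (M - M') = coll d N M - coll d N M' := by
  ext f g
  rw [Matrix.sub_apply, coll_apply, coll_apply, coll_apply, ← Finset.sum_sub_distrib]
  apply Finset.sum_congr rfl
  intro s _
  rw [Matrix.sub_apply, sub_mul]

lemma coll_smul (c : ℂ) (M : Matrix (ZMod d) (ZMod d) ℂ) :
    coll d N (c • M) = c • coll d N M := by
  ext f g
  rw [Matrix.smul_apply, coll_apply, coll_apply, smul_eq_mul, Finset.mul_sum]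
  apply Finset.sum_congr rfl
  intro s _
  show (c • M) (f s) (g s) * _ = _
  rw [Matrix.smul_apply, smul_eq_mul, mul_assoc]

/-- collective mulVec of a matrix unit shifts weight support -/
lemma coll_std_mulVec_supp (a b : ZMod d) (v : (Fin N → ZMod d) → ℂ) (k : ZMod d)
    (hv : ∀ f, W f ≠ k → v f = 0) (f : Fin N → ZMod d) (hf : W f ≠ k + a - b) :
    (coll d N (Matrix.single a b 1) *ᵥ v) f = 0 := by
  show ∑ g, coll d N (Matrix.single a b 1) f g * v g = 0
  apply Finset.sum_eq_zero
  intro g _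
  rw [coll_apply, Finset.sum_mul]
  apply Finset.sum_eq_zero
  intro s _
  by_cases hWg : W g = k
  · by_cases hstd : a = f s ∧ b = g s
    · by_cases hagree : ∀ j ∈ Finset.univ.erase s, f j = g j
      · exfalso
        apply hf
        have h1 : W f = f s + ∑ j ∈ Finset.univ.erase s, f j :=
          (Finset.add_sum_erase _ _ (Finset.mem_univ s)).symm
        have h2 : W g = g s + ∑ j ∈ Finset.univ.erase s, g j :=
          (Finset.add_sum_erase _ _ (Finset.mem_univ s)).symm
        have h3 : ∑ j ∈ Finset.univ.erase s, f j = ∑ j ∈ Finset.univ.erase s, g j :=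
          Finset.sum_congr rfl hagree
        rw [h2] at hWg
        rw [← hstd.2] at hWg
        rw [h1, h3, ← hstd.1]
        have : ∑ j ∈ Finset.univ.erase s, g j = k - b := by
          rw [← hWg]; ring
        rw [this]
        ring
      · push_neg at hagree
        obtain ⟨j, hj, hne⟩ := hagree
        rw [Finset.prod_eq_zero hj (show (if f j = g j then (1:ℂ) else 0) = 0 from if_neg hne)]
        ring
    · rw [show Matrix.single a b (1:ℂ) (f s) (g s) = 0 by
        simp only [Matrix.single, Matrix.of_apply, if_neg hstd]]
      ring
  · rw [hv g hWg]
    ring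

/-- collective of a diagonal matrix is a diagonal (big) matrix -/
lemma coll_diag (M : Matrix (ZMod d) (ZMod d) ℂ) (hM : ∀ a b : ZMod d, a ≠ b → M a b = 0)
    (f g : Fin N → ZMod d) (hfg : f ≠ g) : coll d N M f g = 0 := by
  rw [coll_apply]
  apply Finset.sum_eq_zero
  intro s _
  obtain ⟨j, hj⟩ : ∃ j, f j ≠ g j := by
    by_contra hc
    push_neg at hc
    exact hfg (funext hc)
  by_cases hjs : j = s
  · rw [hM (f s) (g s) (hjs ▸ hj)]
    ring
  · rw [Finset.prod_eq_zero (Finset.mem_erase.mpr ⟨hjs, Finset.mem_univ j⟩)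
      (show (if f j = g j then (1:ℂ) else 0) = 0 from if_neg hj)]
    ring

lemma coll_diag_apply (M : Matrix (ZMod d) (ZMod d) ℂ) (f : Fin N → ZMod d) :
    coll d N M f f = ∑ s : Fin N, M (f s) (f s) := by
  rw [coll_apply]
  apply Finset.sum_congr rfl
  intro s _
  rw [Finset.prod_congr rfl (fun j _ => if_pos rfl), Finset.prod_const_one, mul_one]

lemma coll_diag_mulVec (M : Matrix (ZMod d) (ZMod d) ℂ) (hM : ∀ a b : ZMod d, a ≠ b → M a b = 0)
    (v : (Fin N → ZMod d) → ℂ) (f : Fin N → ZMod d) :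
    (coll d N M *ᵥ v) f = (∑ s : Fin N, M (f s) (f s)) * v f := by
  show ∑ g, coll d N M f g * v g = _
  rw [Finset.sum_eq_single f]
  · rw [coll_diag_apply]
  · intro g _ hg
    rw [coll_diag M hM f g (Ne.symm hg)]
    ring
  · intro h
    exact absurd (Finset.mem_univ f) h

lemma Dmat_diag (ℓ : ZMod d) (a b : ZMod d) (hab : a ≠ b) : Dmat d ℓ a b = 0 := by
  unfold Dmat
  rw [Matrix.sub_apply]
  rw [show Matrix.single ℓ ℓ (1:ℂ) a b = 0 by
      simp only [Matrix.single, Matrix.of_apply]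
      rw [if_neg]; rintro ⟨h1, h2⟩; exact hab (h1 ▸ h2 ▸ rfl),
    show Matrix.single (ℓ+1) (ℓ+1) (1:ℂ) a b = 0 by
      simp only [Matrix.single, Matrix.of_apply]
      rw [if_neg]; rintro ⟨h1, h2⟩; exact hab (h1 ▸ h2 ▸ rfl)]
  ring

lemma star_Dmat_diag (ℓ a : ZMod d) : star (Dmat d ℓ a a) = Dmat d ℓ a a := by
  unfold Dmat
  rw [Matrix.sub_apply]
  simp only [Matrix.single, Matrix.of_apply]
  split_ifs <;> simp

end St15
namespace St15
variable {d N : ℕ} [NeZero d] {bar : ZMod d → (Fin N → ZMod d) → ℂ}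

lemma qinner_add_right (v w w' : (Fin N → ZMod d) → ℂ) :
    qinner d N v (w + w') = qinner d N v w + qinner d N v w' := by
  unfold qinner
  rw [← Finset.sum_add_distrib]
  apply Finset.sum_congr rfl
  intro f _
  rw [Pi.add_apply, mul_add]

lemma qinner_smul_right (c : ℂ) (v w : (Fin N → ZMod d) → ℂ) :
    qinner d N v (c • w) = c * qinner d N v w := by
  unfold qinner
  rw [Finset.mul_sum]
  apply Finset.sum_congr rfl
  intro f _
  rw [Pi.smul_apply, smul_eq_mul]
  ring

lemma qinner_sum_smul_right (v : (Fin N → ZMod d) → ℂ) (c : ZMod d → ℂ)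
    (w : ZMod d → (Fin N → ZMod d) → ℂ) :
    qinner d N v (∑ k : ZMod d, c k • w k) = ∑ k : ZMod d, c k * qinner d N v (w k) := by
  unfold qinner
  simp only [Finset.sum_apply, Pi.smul_apply, smul_eq_mul, Finset.mul_sum]
  rw [Finset.sum_comm]
  apply Finset.sum_congr rfl
  intro k _
  apply Finset.sum_congr rfl
  intro f _
  ring

lemma qinner_sum_smul_left (v : (Fin N → ZMod d) → ℂ) (c : ZMod d → ℂ)
    (w : ZMod d → (Fin N → ZMod d) → ℂ) :
    qinner d N (∑ k : ZMod d, c k • w k) v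
      = ∑ k : ZMod d, star (c k) * qinner d N (w k) v := by
  unfold qinner
  rw [Finset.sum_congr rfl (fun f _ => show star ((∑ k : ZMod d, c k • w k) f) * v f
      = ∑ k : ZMod d, star (c k) * (star (w k f) * v f) from by
    simp only [Finset.sum_apply, Pi.smul_apply, smul_eq_mul, star_sum, Finset.sum_mul]
    apply Finset.sum_congr rfl
    intro k _
    rw [star_mul']
    ring)]
  rw [Finset.sum_comm]
  apply Finset.sum_congr rfl
  intro k _
  rw [Finset.mul_sum]

lemma mulVec_sum_smul (A : Matrix (Fin N → ZMod d) (Fin N → ZMod d) ℂ) (c : ZMod d → ℂ)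
    (w : ZMod d → (Fin N → ZMod d) → ℂ) :
    A *ᵥ (∑ k : ZMod d, c k • w k) = ∑ k : ZMod d, c k • (A *ᵥ w k) := by
  rw [show A *ᵥ (∑ k : ZMod d, c k • w k) = A.mulVecLin (∑ k : ZMod d, c k • w k) from rfl,
    map_sum]
  apply Finset.sum_congr rfl
  intro k _
  rw [LinearMap.map_smul]
  rfl

lemma two_mul_eq_zero (hd : 3 ≤ d) (hodd : Odd d) {x : ZMod d}
    (h2 : (2 : ZMod d) * x = 0) : x = 0 := by
  have hu : IsUnit (2 : ZMod d) := by
    rw [show ((2 : ZMod d)) = ((2 : ℕ) : ZMod d) by norm_num]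
    exact (ZMod.isUnit_iff_coprime 2 d).mpr (Nat.coprime_two_left.mpr hodd)
  exact hu.mul_left_cancel (by rw [h2, mul_zero])

section Main
variable (hd : 3 ≤ d) (hodd : Odd d)
    (hX : ∀ k : ZMod d, bar k = (tpow d N (shiftX d)) ^ k.val *ᵥ bar 0)
    (hW : ∀ k : ZMod d, bar k ∈
      Submodule.span ℂ {w : (Fin N → ZMod d) → ℂ | ∃ u : ZMod d → ℤ,
        admissible d N u ∧ cweight d u ≡ (k.val : ℤ) [ZMOD (d : ℤ)] ∧ w = dicke d N u})
    (hC1 : ∀ i j : ZMod d, i ≠ j → ∀ n : ℕ, 1 ≤ n → n ≤ (d - 1) / 2 →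
      qinner d N (bar i) (coll d N (Smat d 0 ((n : ℕ) : ZMod d)) *ᵥ bar j) = 0)

include hd hodd hX hC1 in
lemma C1' (δ : ZMod d) (hδ : δ ≠ 0) (i j : ZMod d) (hij : i ≠ j) :
    qinner d N (bar i) (coll d N (Smat d 0 δ) *ᵥ bar j) = 0 := by
  have hval : δ.val ≠ 0 := fun hc => hδ ((ZMod.val_eq_zero δ).mp hc)
  have hvlt : δ.val < d := ZMod.val_lt δ
  obtain ⟨m, hm⟩ := hodd
  by_cases h : δ.val ≤ (d - 1) / 2
  · have h1 := hC1 i j hij δ.val (by omega) h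
    rwa [ZMod.natCast_val, ZMod.cast_id] at h1
  · have hcov := qinner_cov hX (Smat d 0 δ) (-δ) i j
    rw [shiftSmall_Smat, zero_add, add_neg_cancel] at hcov
    have hsm : Smat d (-δ) 0 = Smat d 0 (-δ) := by
      unfold Smat; rw [add_comm]
    rw [hsm] at hcov
    rw [hcov]
    have hnval : (-δ).val = d - δ.val := by
      rw [ZMod.neg_val, if_neg hδ]
    have h2 := hC1 (i + -δ) (j + -δ)
      (fun hc => hij (by
        have := add_right_cancel hc; exact this))
      (-δ).val (by omega) (by omega)
    rwa [ZMod.natCast_val, ZMod.cast_id] at h2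

include hW in
lemma std_elem_zero_of_ne (a b i j : ZMod d) (hne : i ≠ j + a - b) :
    qinner d N (bar i) (coll d N (Matrix.single a b 1) *ᵥ bar j) = 0 := by
  apply Finset.sum_eq_zero
  intro f _
  by_cases h : W f = i
  · rw [coll_std_mulVec_supp a b (bar j) j (bar_supp hW j) f (by rw [h]; exact hne)]
    ring
  · rw [bar_supp hW i f h]
    simp

include hd hodd hX hW hC1 in
lemma unit_zero (a b : ZMod d) (hab : a ≠ b) (i j : ZMod d) :
    qinner d N (bar i) (coll d N (Matrix.single a b 1) *ᵥ bar j) = 0 := by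
  by_cases hij : i = j + a - b
  · have hij' : i ≠ j := by
      rw [hij]
      intro hc
      apply hab
      have : a - b = 0 := by linear_combination hc
      linear_combination this
    have h2 : qinner d N (bar i) (coll d N (Matrix.single b a 1) *ᵥ bar j) = 0 := by
      apply std_elem_zero_of_ne hW
      rw [hij]
      intro hc
      apply hab
      have h3 : (2 : ZMod d) * (a - b) = 0 := by linear_combination hc
      have := two_mul_eq_zero hd hodd h3
      linear_combination this
    have hS : qinner d N (bar i) (coll d N (Smat d a b) *ᵥ bar j) = 0 := by
      have hcov := qinner_cov hX (Smat d a b) (-a) i j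
      rw [shiftSmall_Smat, add_neg_cancel] at hcov
      rw [hcov]
      exact C1' hd hodd hX hC1 (b + -a)
        (fun hc => hab (by linear_combination hc.symm))
        (i + -a) (j + -a)
        (fun hc => hij' (add_right_cancel hc))
    have hsum : qinner d N (bar i) (coll d N (Smat d a b) *ᵥ bar j)
        = qinner d N (bar i) (coll d N (Matrix.single a b 1) *ᵥ bar j)
          + qinner d N (bar i) (coll d N (Matrix.single b a 1) *ᵥ bar j) := by
      unfold Smat
      rw [coll_add, Matrix.add_mulVec, qinner_add_right]
    rw [hsum, h2, add_zero] at hS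
    exact hS
  · exact std_elem_zero_of_ne hW a b i j hij

include hd hodd hX hW hC1 in
lemma SA_zero (a b : ZMod d) (hab : a ≠ b) (Γ : Matrix (ZMod d) (ZMod d) ℂ)
    (hΓ : Γ = Smat d a b ∨ Γ = Amat d a b) (i j : ZMod d) :
    qinner d N (bar i) (coll d N Γ *ᵥ bar j) = 0 := by
  rcases hΓ with rfl | rfl
  · unfold Smat
    rw [coll_add, Matrix.add_mulVec, qinner_add_right,
      unit_zero hd hodd hX hW hC1 a b hab, unit_zero hd hodd hX hW hC1 b a hab.symm, add_zero]
  · unfold Amat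
    rw [coll_add, coll_smul, coll_smul, Matrix.add_mulVec, Matrix.smul_mulVec,
      Matrix.smul_mulVec, qinner_add_right, qinner_smul_right, qinner_smul_right,
      unit_zero hd hodd hX hW hC1 a b hab, unit_zero hd hodd hX hW hC1 b a hab.symm]
    ring

end Main
end St15
namespace St15
variable {d N : ℕ} [NeZero d] {bar : ZMod d → (Fin N → ZMod d) → ℂ}

lemma bigdiag_mul_apply (P Q : Matrix (Fin N → ZMod d) (Fin N → ZMod d) ℂ)
    (hP : ∀ f g, f ≠ g → P f g = 0) (hQ : ∀ f g, f ≠ g → Q f g = 0) (f g : Fin N → ZMod d) :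
    (P * Q) f g = if f = g then P f f * Q f f else 0 := by
  rw [Matrix.mul_apply, Finset.sum_eq_single f]
  · by_cases h : f = g
    · rw [if_pos h, ← h]
    · rw [if_neg h, hQ f g h, mul_zero]
  · intro h _ hh
    rw [hP f h (fun hc => hh hc.symm)]
    ring
  · intro h
    exact absurd (Finset.mem_univ f) h

lemma bigdiag_mul_comm (P Q : Matrix (Fin N → ZMod d) (Fin N → ZMod d) ℂ)
    (hP : ∀ f g, f ≠ g → P f g = 0) (hQ : ∀ f g, f ≠ g → Q f g = 0) :
    P * Q = Q * P := by
  ext f g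
  rw [bigdiag_mul_apply P Q hP hQ, bigdiag_mul_apply Q P hQ hP]
  by_cases h : f = g
  · rw [if_pos h, if_pos h, mul_comm]
  · rw [if_neg h, if_neg h]

lemma bigdiag_mul_diag (P Q : Matrix (Fin N → ZMod d) (Fin N → ZMod d) ℂ)
    (hP : ∀ f g, f ≠ g → P f g = 0) (hQ : ∀ f g, f ≠ g → Q f g = 0)
    (f g : Fin N → ZMod d) (hfg : f ≠ g) : (P * Q) f g = 0 := by
  rw [bigdiag_mul_apply P Q hP hQ, if_neg hfg]

lemma qinner_coll_diag_move (M : Matrix (ZMod d) (ZMod d) ℂ)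
    (hM : ∀ a b : ZMod d, a ≠ b → M a b = 0) (hreal : ∀ a : ZMod d, star (M a a) = M a a)
    (v w : (Fin N → ZMod d) → ℂ) :
    qinner d N v (coll d N M *ᵥ w) = qinner d N (coll d N M *ᵥ v) w := by
  unfold qinner
  apply Finset.sum_congr rfl
  intro f _
  rw [coll_diag_mulVec M hM, coll_diag_mulVec M hM]
  have hs : star (∑ s : Fin N, M (f s) (f s)) = ∑ s : Fin N, M (f s) (f s) := by
    rw [star_sum]
    exact Finset.sum_congr rfl fun s _ => hreal _
  rw [star_mul', hs]
  ring

section Main2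
variable (hd : 3 ≤ d) (hodd : Odd d)
    (hX : ∀ k : ZMod d, bar k = (tpow d N (shiftX d)) ^ k.val *ᵥ bar 0)
    (hW : ∀ k : ZMod d, bar k ∈
      Submodule.span ℂ {w : (Fin N → ZMod d) → ℂ | ∃ u : ZMod d → ℤ,
        admissible d N u ∧ cweight d u ≡ (k.val : ℤ) [ZMOD (d : ℤ)] ∧ w = dicke d N u})
    (hD : ∀ ℓ j : ZMod d,
      coll d N (Dmat d ℓ) *ᵥ bar j ∈ Submodule.span ℂ (Set.range bar))
    (hC3 : ∀ k k' : ZMod d,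
      qinner d N (bar k) (coll d N (Dmat d (((d - 2 : ℕ) : ZMod d))) *ᵥ bar k) =
      qinner d N (bar k') (coll d N (Dmat d (((d - 2 : ℕ) : ZMod d))) *ᵥ bar k'))
    (hC4 : ∀ ℓ : ℕ, ℓ ≤ d - 2 → ∀ k k' : ZMod d,
      qinner d N (bar k)
        ((coll d N (Dmat d ((ℓ : ℕ) : ZMod d)) *
          coll d N (Dmat d (((d - 2 : ℕ) : ZMod d)))) *ᵥ bar k) =
      qinner d N (bar k')
        ((coll d N (Dmat d ((ℓ : ℕ) : ZMod d)) *
          coll d N (Dmat d (((d - 2 : ℕ) : ZMod d)))) *ᵥ bar k'))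

include hW in
lemma qinner_bigdiag_zero (P : Matrix (Fin N → ZMod d) (Fin N → ZMod d) ℂ)
    (hP : ∀ f g, f ≠ g → P f g = 0) (i j : ZMod d) (hij : i ≠ j) :
    qinner d N (bar i) (P *ᵥ bar j) = 0 := by
  apply Finset.sum_eq_zero
  intro f _
  by_cases h : W f = i
  · have hz : ∀ g, P f g * bar j g = 0 := by
      intro g
      by_cases hg : f = g
      · rw [← hg, bar_supp hW j f (by rw [h]; exact hij), mul_zero]
      · rw [hP f g hg, zero_mul]
    rw [show (P *ᵥ bar j) f = ∑ g, P f g * bar j g from rfl,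
      Finset.sum_congr rfl fun g _ => hz g, Finset.sum_const_zero, mul_zero]
  · rw [bar_supp hW i f h]
    simp

include hX hC3 in
lemma D_diag_const (ℓ : ZMod d) (k k' : ZMod d) :
    qinner d N (bar k) (coll d N (Dmat d ℓ) *ᵥ bar k)
      = qinner d N (bar k') (coll d N (Dmat d ℓ) *ᵥ bar k') := by
  have h1 := qinner_cov hX (Dmat d ℓ) (((d - 2 : ℕ) : ZMod d) - ℓ) k k
  have h2 := qinner_cov hX (Dmat d ℓ) (((d - 2 : ℕ) : ZMod d) - ℓ) k' k'
  rw [shiftSmall_Dmat] at h1 h2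
  have he : ℓ + (((d - 2 : ℕ) : ZMod d) - ℓ) = ((d - 2 : ℕ) : ZMod d) := by ring
  rw [he] at h1 h2
  rw [h1, h2]
  exact hC3 _ _

include hd hX hC4 in
lemma DD_core (a b : ZMod d) (hab : a - b ≠ 1) (k k' : ZMod d) :
    qinner d N (bar k) ((coll d N (Dmat d a) * coll d N (Dmat d b)) *ᵥ bar k)
      = qinner d N (bar k') ((coll d N (Dmat d a) * coll d N (Dmat d b)) *ᵥ bar k') := by
  have h1 := qinner_cov2 hX (Dmat d a) (Dmat d b) (((d - 2 : ℕ) : ZMod d) - b) k k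
  have h2 := qinner_cov2 hX (Dmat d a) (Dmat d b) (((d - 2 : ℕ) : ZMod d) - b) k' k'
  rw [shiftSmall_Dmat, shiftSmall_Dmat] at h1 h2
  have hb : b + (((d - 2 : ℕ) : ZMod d) - b) = ((d - 2 : ℕ) : ZMod d) := by ring
  rw [hb] at h1 h2
  set x : ZMod d := a + (((d - 2 : ℕ) : ZMod d) - b) with hxdef
  have hd1 : ((d - 1 : ℕ) : ZMod d) = ((d - 2 : ℕ) : ZMod d) + 1 := by
    have h : (d - 1 : ℕ) = (d - 2) + 1 := by omega
    rw [h]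
    push_cast
    ring
  have hx : x ≠ ((d - 1 : ℕ) : ZMod d) := by
    rw [hd1]
    intro hc
    apply hab
    rw [hxdef] at hc
    linear_combination hc
  have hxval : x.val ≤ d - 2 := by
    have hlt := ZMod.val_lt x
    by_contra hcon
    have hv : x.val = d - 1 := by omega
    apply hx
    conv_lhs => rw [show x = ((x.val : ℕ) : ZMod d) by rw [ZMod.natCast_val, ZMod.cast_id]]
    rw [hv]
  have h3 := hC4 x.val hxval (k + (((d - 2 : ℕ) : ZMod d) - b)) (k' + (((d - 2 : ℕ) : ZMod d) - b))
  rw [ZMod.natCast_val, ZMod.cast_id] at h3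
  rw [h1, h2]
  exact h3

include hd hodd hX hC4 in
lemma DD_diag_const (a b : ZMod d) (k k' : ZMod d) :
    qinner d N (bar k) ((coll d N (Dmat d a) * coll d N (Dmat d b)) *ᵥ bar k)
      = qinner d N (bar k') ((coll d N (Dmat d a) * coll d N (Dmat d b)) *ᵥ bar k') := by
  by_cases hab : a - b = 1
  · have hba : b - a ≠ 1 := by
      intro hc
      haveI : Fact (1 < d) := ⟨by omega⟩
      have h0 : (2 : ZMod d) * 1 = 0 := by linear_combination -hab - hc
      exact one_ne_zero (two_mul_eq_zero hd hodd h0)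
    have hcomm : coll d N (Dmat d a) * coll d N (Dmat d b)
        = coll d N (Dmat d b) * coll d N (Dmat d a) :=
      bigdiag_mul_comm _ _ (fun f g hfg => coll_diag _ (Dmat_diag a) f g hfg)
        (fun f g hfg => coll_diag _ (Dmat_diag b) f g hfg)
    rw [hcomm]
    exact DD_core hd hX hC4 b a hba k k'
  · exact DD_core hd hX hC4 a b hab k k'

include hD in
lemma SA_D (Γ : Matrix (ZMod d) (ZMod d) ℂ)
    (hΓzero : ∀ i j : ZMod d, qinner d N (bar i) (coll d N Γ *ᵥ bar j) = 0)
    (ℓ : ZMod d) (i j : ZMod d) :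
    qinner d N (bar i) ((coll d N Γ * coll d N (Dmat d ℓ)) *ᵥ bar j) = 0 := by
  obtain ⟨c, hc⟩ := (Submodule.mem_span_range_iff_exists_fun ℂ).mp (hD ℓ j)
  rw [← Matrix.mulVec_mulVec, ← hc, mulVec_sum_smul, qinner_sum_smul_right]
  apply Finset.sum_eq_zero
  intro k _
  rw [hΓzero i k, mul_zero]

include hD in
lemma D_SA (Γ : Matrix (ZMod d) (ZMod d) ℂ)
    (hΓzero : ∀ i j : ZMod d, qinner d N (bar i) (coll d N Γ *ᵥ bar j) = 0)
    (ℓ : ZMod d) (i j : ZMod d) :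
    qinner d N (bar i) ((coll d N (Dmat d ℓ) * coll d N Γ) *ᵥ bar j) = 0 := by
  rw [← Matrix.mulVec_mulVec,
    qinner_coll_diag_move (Dmat d ℓ) (Dmat_diag ℓ) (star_Dmat_diag ℓ)]
  obtain ⟨c, hc⟩ := (Submodule.mem_span_range_iff_exists_fun ℂ).mp (hD ℓ i)
  rw [← hc, qinner_sum_smul_left]
  apply Finset.sum_eq_zero
  intro k _
  rw [hΓzero k j, mul_zero]

end Main2
end St15
/-- Theorem 5. -/
theorem stmt15 (d N : ℕ) [NeZero d] (hd : 3 ≤ d) (hodd : Odd d) (hN : 1 ≤ N)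
    (bar : ZMod d → (Fin N → ZMod d) → ℂ)
    -- (i) orthonormality
    (hON : ∀ i j : ZMod d, qinner d N (bar i) (bar j) = if i = j then 1 else 0)
    -- (ii) |k̄⟩ = X̄^k |0̄⟩
    (hX : ∀ k : ZMod d, bar k = (tpow d N (shiftX d)) ^ k.val *ᵥ bar 0)
    -- (iii) |k̄⟩ is a combination of Dicke vectors of weight ≡ k (mod d)
    (hW : ∀ k : ZMod d, bar k ∈
      Submodule.span ℂ {w : (Fin N → ZMod d) → ℂ | ∃ u : ZMod d → ℤ,
        admissible d N u ∧ cweight d u ≡ (k.val : ℤ) [ZMOD (d : ℤ)] ∧ w = dicke d N u})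
    -- (iv) D~^(ℓ)|j̄⟩ lies in the span of the codewords
    (hD : ∀ ℓ j : ZMod d,
      coll d N (Dmat d ℓ) *ᵥ bar j ∈ Submodule.span ℂ (Set.range bar))
    -- (C1)
    (hC1 : ∀ i j : ZMod d, i ≠ j → ∀ n : ℕ, 1 ≤ n → n ≤ (d - 1) / 2 →
      qinner d N (bar i) (coll d N (Smat d 0 ((n : ℕ) : ZMod d)) *ᵥ bar j) = 0)
    -- (C2)
    (hC2 : ∀ p q r s : ℕ, p < q → q ≤ d - 1 → r < s → s ≤ d - 1 →
      ∀ Γ Υ : Matrix (ZMod d) (ZMod d) ℂ,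
        (Γ = Smat d ((p : ℕ) : ZMod d) ((q : ℕ) : ZMod d) ∨
         Γ = Amat d ((p : ℕ) : ZMod d) ((q : ℕ) : ZMod d)) →
        (Υ = Smat d ((r : ℕ) : ZMod d) ((s : ℕ) : ZMod d) ∨
         Υ = Amat d ((r : ℕ) : ZMod d) ((s : ℕ) : ZMod d)) →
        ∃ c : ℂ, ∀ i j : ZMod d,
          qinner d N (bar i) ((coll d N Γ * coll d N Υ) *ᵥ bar j) =
            if i = j then c else 0)
    -- (C3)
    (hC3 : ∀ k k' : ZMod d,
      qinner d N (bar k) (coll d N (Dmat d (((d - 2 : ℕ) : ZMod d))) *ᵥ bar k) =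
      qinner d N (bar k') (coll d N (Dmat d (((d - 2 : ℕ) : ZMod d))) *ᵥ bar k'))
    -- (C4)
    (hC4 : ∀ ℓ : ℕ, ℓ ≤ d - 2 → ∀ k k' : ZMod d,
      qinner d N (bar k)
        ((coll d N (Dmat d ((ℓ : ℕ) : ZMod d)) *
          coll d N (Dmat d (((d - 2 : ℕ) : ZMod d)))) *ᵥ bar k) =
      qinner d N (bar k')
        ((coll d N (Dmat d ((ℓ : ℕ) : ZMod d)) *
          coll d N (Dmat d (((d - 2 : ℕ) : ZMod d)))) *ᵥ bar k')) :
    ∀ E F : Matrix (Fin N → ZMod d) (Fin N → ZMod d) ℂ,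
      ((∃ p q : ℕ, p < q ∧ q ≤ d - 1 ∧
          (E = coll d N (Smat d ((p : ℕ) : ZMod d) ((q : ℕ) : ZMod d)) ∨
           E = coll d N (Amat d ((p : ℕ) : ZMod d) ((q : ℕ) : ZMod d)))) ∨
        (∃ ℓ : ℕ, ℓ ≤ d - 2 ∧ E = coll d N (Dmat d ((ℓ : ℕ) : ZMod d)))) →
      ((∃ p q : ℕ, p < q ∧ q ≤ d - 1 ∧
          (F = coll d N (Smat d ((p : ℕ) : ZMod d) ((q : ℕ) : ZMod d)) ∨
           F = coll d N (Amat d ((p : ℕ) : ZMod d) ((q : ℕ) : ZMod d)))) ∨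
        (∃ ℓ : ℕ, ℓ ≤ d - 2 ∧ F = coll d N (Dmat d ((ℓ : ℕ) : ZMod d)))) →
      (∃ cE : ℂ, ∀ i j : ZMod d,
          qinner d N (bar i) (E *ᵥ bar j) = if i = j then cE else 0) ∧
      (∃ cEF : ℂ, ∀ i j : ZMod d,
          qinner d N (bar i) ((E * F) *ᵥ bar j) = if i = j then cEF else 0) := by
  have hne : ∀ p q : ℕ, p < q → q ≤ d - 1 → ((p : ZMod d) ≠ (q : ZMod d)) := by
    intro p q hpq hq hc
    have hp' : p < d := by omega
    have hq' : q < d := by omega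
    have hv := congrArg ZMod.val hc
    rw [ZMod.val_natCast_of_lt hp', ZMod.val_natCast_of_lt hq'] at hv
    omega
  have hSAzero : ∀ p q : ℕ, p < q → q ≤ d - 1 →
      ∀ Γ : Matrix (ZMod d) (ZMod d) ℂ,
      (Γ = Smat d ((p : ℕ) : ZMod d) ((q : ℕ) : ZMod d) ∨
       Γ = Amat d ((p : ℕ) : ZMod d) ((q : ℕ) : ZMod d)) →
      ∀ i j : ZMod d, qinner d N (bar i) (coll d N Γ *ᵥ bar j) = 0 :=
    fun p q hpq hq Γ hΓ i j =>
      St15.SA_zero hd hodd hX hW hC1 _ _ (hne p q hpq hq) Γ hΓ i j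
  intro E F hE hF
  constructor
  · rcases hE with ⟨p, q, hpq, hq, hEe⟩ | ⟨ℓ, hℓ, rfl⟩
    · refine ⟨0, fun i j => ?_⟩
      have h0 : qinner d N (bar i) (E *ᵥ bar j) = 0 := by
        rcases hEe with rfl | rfl
        · exact hSAzero p q hpq hq _ (Or.inl rfl) i j
        · exact hSAzero p q hpq hq _ (Or.inr rfl) i j
      rw [h0]
      exact (ite_self 0).symm
    · refine ⟨qinner d N (bar 0) (coll d N (Dmat d ((ℓ : ℕ) : ZMod d)) *ᵥ bar 0),
        fun i j => ?_⟩
      by_cases hij : i = j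
      · subst hij
        rw [if_pos rfl]
        exact St15.D_diag_const hX hC3 _ i 0
      · rw [if_neg hij]
        exact St15.qinner_bigdiag_zero hW _
          (fun f g hfg => St15.coll_diag _ (St15.Dmat_diag _) f g hfg) i j hij
  · rcases hE with ⟨p, q, hpq, hq, hEe⟩ | ⟨ℓ, hℓ, rfl⟩
    · rcases hF with ⟨r, s, hrs, hs, hFe⟩ | ⟨ℓ', hℓ', rfl⟩
      · rcases hEe with rfl | rfl <;> rcases hFe with rfl | rfl
        · exact hC2 p q r s hpq hq hrs hs _ _ (Or.inl rfl) (Or.inl rfl)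
        · exact hC2 p q r s hpq hq hrs hs _ _ (Or.inl rfl) (Or.inr rfl)
        · exact hC2 p q r s hpq hq hrs hs _ _ (Or.inr rfl) (Or.inl rfl)
        · exact hC2 p q r s hpq hq hrs hs _ _ (Or.inr rfl) (Or.inr rfl)
      · refine ⟨0, fun i j => ?_⟩
        have h0 : qinner d N (bar i) ((E * coll d N (Dmat d ((ℓ' : ℕ) : ZMod d))) *ᵥ bar j)
            = 0 := by
          rcases hEe with rfl | rfl
          · exact St15.SA_D hD _ (hSAzero p q hpq hq _ (Or.inl rfl)) _ i j
          · exact St15.SA_D hD _ (hSAzero p q hpq hq _ (Or.inr rfl)) _ i j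
        rw [h0]
        exact (ite_self 0).symm
    · rcases hF with ⟨r, s, hrs, hs, hFe⟩ | ⟨ℓ', hℓ', rfl⟩
      · refine ⟨0, fun i j => ?_⟩
        have h0 : qinner d N (bar i) ((coll d N (Dmat d ((ℓ : ℕ) : ZMod d)) * F) *ᵥ bar j)
            = 0 := by
          rcases hFe with rfl | rfl
          · exact St15.D_SA hD _ (hSAzero r s hrs hs _ (Or.inl rfl)) _ i j
          · exact St15.D_SA hD _ (hSAzero r s hrs hs _ (Or.inr rfl)) _ i j
        rw [h0]
        exact (ite_self 0).symm
      · refine ⟨qinner d N (bar 0)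
          ((coll d N (Dmat d ((ℓ : ℕ) : ZMod d)) * coll d N (Dmat d ((ℓ' : ℕ) : ZMod d)))
            *ᵥ bar 0), fun i j => ?_⟩
        by_cases hij : i = j
        · subst hij
          rw [if_pos rfl]
          exact St15.DD_diag_const hd hodd hX hC4 _ _ i 0
        · rw [if_neg hij]
          exact St15.qinner_bigdiag_zero hW _
            (St15.bigdiag_mul_diag _ _
              (fun f g hfg => St15.coll_diag _ (St15.Dmat_diag _) f g hfg)
              (fun f g hfg => St15.coll_diag _ (St15.Dmat_diag _) f g hfg)) i j hij
end

section
/- Let v be a permutation-invariant N-qudit vector. Then ⟨v| D~^(ℓ) |v⟩ = 0 for every ℓ ∈ ZMod d. -/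
open Matrix Complex Finset

theorem stmt17 (d N : ℕ) [NeZero d] (hd : 2 ≤ d) (hN : 1 ≤ N)
    (v : (Fin N → ZMod d) → ℂ) (β : (ZMod d → ℤ) →₀ ℂ)
    (hadm : ∀ u : ZMod d → ℤ, ¬ admissible d N u → β u = 0)
    (hperm : ∀ π : Equiv.Perm (ZMod d), ∀ u : ZMod d → ℤ, β (u ∘ π) = β u)
    (hv : v = β.sum fun u c => c • dicke d N u)
    (ℓ : ZMod d) :
    qinner d N v (coll d N (Dmat d ℓ) *ᵥ v) = 0 := by
  classical
  set τ : Equiv.Perm (ZMod d) := Equiv.swap ℓ (ℓ + 1) with hτ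
  set cnt : (Fin N → ZMod d) → ZMod d → ℤ :=
    fun f k => ((Finset.univ.filter fun i => f i = k).card : ℤ) with hcnt
  -- v f = β (cnt f)
  have hvf : ∀ f, v f = β (cnt f) := by
    intro f
    rw [hv]
    have hiff : ∀ u : ZMod d → ℤ,
        (∀ k : ZMod d, ((Finset.univ.filter fun i => f i = k).card : ℤ) = u k) ↔ u = cnt f := by
      intro u
      constructor
      · intro h; funext k; exact (h k).symm
      · intro h k; rw [h]
    have h1 : ∀ u ∈ β.support, (β u • dicke d N u) f = if u = cnt f then β u else 0 := by
      intro u _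
      simp only [Pi.smul_apply, dicke, smul_eq_mul, mul_ite, mul_one, mul_zero, hiff u]
    show (∑ u ∈ β.support, β u • dicke d N u) f = β (cnt f)
    rw [Finset.sum_apply, Finset.sum_congr rfl h1,
      Finset.sum_ite_eq' β.support (cnt f) (fun u => β u)]
    by_cases hs : cnt f ∈ β.support
    · simp [hs]
    · simp [hs, Finsupp.notMem_support_iff.mp hs]
  have hDne : ∀ a b : ZMod d, a ≠ b → Dmat d ℓ a b = 0 := by
    intro a b hab
    simp only [Dmat, Matrix.sub_apply, Matrix.single, Matrix.of_apply]
    have h1 : ¬(ℓ = a ∧ ℓ = b) := fun h => hab (h.1.symm.trans h.2)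
    have h2 : ¬(ℓ + 1 = a ∧ ℓ + 1 = b) := fun h => hab (h.1.symm.trans h.2)
    rw [if_neg h1, if_neg h2, sub_zero]
  have hDeq : ∀ a : ZMod d,
      Dmat d ℓ a a = (if a = ℓ then (1 : ℂ) else 0) - (if a = ℓ + 1 then 1 else 0) := by
    intro a
    simp only [Dmat, Matrix.sub_apply, Matrix.single, Matrix.of_apply, and_self]
    simp [eq_comm]
  have hcoll : ∀ f g, coll d N (Dmat d ℓ) f g =
      if g = f then ((cnt f ℓ : ℂ) - (cnt f (ℓ + 1) : ℂ)) else 0 := by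
    intro f g
    by_cases hfg : g = f
    · subst hfg
      rw [if_pos rfl]
      simp only [coll, Matrix.sum_apply]
      have hsite : ∀ i : Fin N, site d N (Dmat d ℓ) i g g =
          (if g i = ℓ then (1 : ℂ) else 0) - (if g i = ℓ + 1 then 1 else 0) := by
        intro i
        simp only [site, Matrix.of_apply]
        rw [hDeq]
        simp
      rw [Finset.sum_congr rfl fun i _ => hsite i, Finset.sum_sub_distrib,
        Finset.sum_boole, Finset.sum_boole]
      simp [hcnt]
    · rw [if_neg hfg]
      simp only [coll, Matrix.sum_apply]
      refine Finset.sum_eq_zero fun i _ => ?_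
      simp only [site, Matrix.of_apply]
      obtain ⟨j, hj⟩ : ∃ j, g j ≠ f j := by
        by_contra hc
        push_neg at hc
        exact hfg (funext hc)
      by_cases hi : f i = g i
      · refine mul_eq_zero_of_right _ ?_
        refine Finset.prod_eq_zero (i := j) ?_ ?_
        · refine Finset.mem_erase.mpr ⟨?_, Finset.mem_univ j⟩
          rintro rfl; exact hj hi.symm
        · rw [if_neg (fun h => hj h.symm)]
      · rw [hDne _ _ hi, zero_mul]
  have hmul : ∀ f, (coll d N (Dmat d ℓ) *ᵥ v) f =
      ((cnt f ℓ : ℂ) - (cnt f (ℓ + 1) : ℂ)) * v f := by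
    intro f
    simp only [Matrix.mulVec, dotProduct]
    rw [Finset.sum_congr rfl fun g _ => by rw [hcoll f g]]
    simp [ite_mul]
  simp only [qinner, hmul]
  set σ : (Fin N → ZMod d) ≃ (Fin N → ZMod d) :=
    Equiv.arrowCongr (Equiv.refl (Fin N)) τ with hσ
  have hσapp : ∀ f i, σ f i = τ (f i) := by
    intro f i; simp [hσ, Equiv.arrowCongr_apply, Function.comp]
  have hσcnt : ∀ f, cnt (σ f) = cnt f ∘ τ := by
    intro f
    funext k
    simp only [hcnt, Function.comp_apply]
    congr 1
    refine congrArg Finset.card (Finset.filter_congr fun i _ => ?_)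
    rw [hσapp]
    simp [hτ, Equiv.swap_apply_eq_iff]
  have hvσ : ∀ f, v (σ f) = v f := by
    intro f
    rw [hvf, hvf, hσcnt]
    exact hperm τ (cnt f)
  have main : ∀ (F : (Fin N → ZMod d) → ℂ), (∀ f, F (σ f) = -F f) →
      ∑ f : Fin N → ZMod d, F f = 0 := by
    intro F hF
    have h1 : ∑ f : Fin N → ZMod d, F (σ f) = ∑ f : Fin N → ZMod d, F f :=
      Equiv.sum_comp σ F
    rw [Finset.sum_congr rfl fun f _ => hF f, Finset.sum_neg_distrib] at h1
    linear_combination (-1/2 : ℂ) * h1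
  refine main _ fun f => ?_
  rw [hvσ, hσcnt]
  have h1 : (cnt f ∘ τ) ℓ = cnt f (ℓ + 1) := by simp [hτ]
  have h2 : (cnt f ∘ τ) (ℓ + 1) = cnt f ℓ := by simp [hτ]
  rw [h1, h2]
  ring
end

section
/- Let v be a permutation-invariant N-qudit vector. Then the diagonal second-order matrix elements are independent of the operator indices: for all p ≠ q and r ≠ s in ZMod d, ⟨v| S~^(p,q) S~^(p,q) |v⟩ = ⟨v| S~^(r,s) S~^(r,s) |v⟩; and for all ℓ, m ∈ ZMod d, ⟨v| D~^(ℓ) D~^(ℓ) |v⟩ = ⟨v| D~^(m) D~^(m) |v⟩. -/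
open Matrix Complex Finset

lemma exists_perm_pair {α : Type*} [DecidableEq α] {a b c e : α} (hab : a ≠ b) (hce : c ≠ e) :
    ∃ σ : Equiv.Perm α, σ a = c ∧ σ b = e := by
  refine ⟨(Equiv.swap a c).trans (Equiv.swap ((Equiv.swap a c) b) e), ?_, ?_⟩
  · have h1 : c ≠ (Equiv.swap a c) b := by
      by_cases hbc : b = c
      · subst hbc
        rw [Equiv.swap_apply_right]
        exact fun h => hab h.symm
      · rw [Equiv.swap_apply_of_ne_of_ne (fun h => hab h.symm) hbc]
        exact fun h => hbc h.symm
    simp only [Equiv.trans_apply, Equiv.swap_apply_left]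
    exact Equiv.swap_apply_of_ne_of_ne h1 hce
  · simp only [Equiv.trans_apply, Equiv.swap_apply_left]

lemma dicke_perm (d N : ℕ) [NeZero d] (u : ZMod d → ℤ) (π : Equiv.Perm (ZMod d))
    (f : Fin N → ZMod d) :
    dicke d N u (fun i => π (f i)) = dicke d N (u ∘ π) f := by
  unfold dicke
  congr 1
  refine propext ⟨fun h k => ?_, fun h k => ?_⟩
  · have := h (π k)
    simpa [EmbeddingLike.apply_eq_iff_eq] using this
  · have := h (π.symm k)
    simpa [Equiv.eq_symm_apply] using this

lemma vperm (d N : ℕ) [NeZero d] (β : (ZMod d → ℤ) →₀ ℂ)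
    (hperm : ∀ π : Equiv.Perm (ZMod d), ∀ u : ZMod d → ℤ, β (u ∘ π) = β u)
    (π : Equiv.Perm (ZMod d)) (f : Fin N → ZMod d) :
    (β.sum fun u c => c • dicke d N u) (fun i => π (f i)) =
    (β.sum fun u c => c • dicke d N u) f := by
  simp only [Finsupp.sum, Finset.sum_apply]
  simp only [Pi.smul_apply, dicke_perm, smul_eq_mul]
  refine Finset.sum_nbij' (fun u => u ∘ π) (fun u => u ∘ π.symm) ?_ ?_ ?_ ?_ ?_
  · intro u hu
    rw [Finsupp.mem_support_iff] at hu ⊢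
    rwa [hperm]
  · intro u hu
    rw [Finsupp.mem_support_iff] at hu ⊢
    show β (u ∘ ⇑π.symm) ≠ 0
    rwa [hperm π.symm u]
  · intro u _; funext k; simp
  · intro u _; funext k; simp
  · intro u _
    rw [hperm]

lemma coll_perm (d N : ℕ) [NeZero d] (M M' : Matrix (ZMod d) (ZMod d) ℂ)
    (π : Equiv.Perm (ZMod d)) (hM : ∀ a b, M' (π a) (π b) = M a b) (f g : Fin N → ZMod d) :
    coll d N M' (fun i => π (f i)) (fun i => π (g i)) = coll d N M f g := by
  simp only [coll, site, Matrix.sum_apply, Matrix.of_apply, hM,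
    EmbeddingLike.apply_eq_iff_eq]

lemma key_lemma (d N : ℕ) [NeZero d] (v : (Fin N → ZMod d) → ℂ)
    (hvp : ∀ (π : Equiv.Perm (ZMod d)) (f : Fin N → ZMod d), v (fun i => π (f i)) = v f)
    (M M' : Matrix (ZMod d) (ZMod d) ℂ) (π : Equiv.Perm (ZMod d))
    (hM : ∀ a b, M' (π a) (π b) = M a b) :
    qinner d N v ((coll d N M' * coll d N M') *ᵥ v) =
    qinner d N v ((coll d N M * coll d N M) *ᵥ v) := by
  classical
  set E : (Fin N → ZMod d) ≃ (Fin N → ZMod d) := Equiv.piCongrRight (fun _ => π) with hE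
  have hEapp : ∀ f : Fin N → ZMod d, E f = fun i => π (f i) := fun f => rfl
  unfold qinner
  rw [← Equiv.sum_comp E (fun f => star (v f) * ((coll d N M' * coll d N M') *ᵥ v) f)]
  refine Finset.sum_congr rfl fun f _ => ?_
  rw [hEapp, hvp]
  congr 1
  unfold Matrix.mulVec dotProduct
  rw [← Equiv.sum_comp E
    (fun h => (coll d N M' * coll d N M') (fun i => π (f i)) h * v h)]
  refine Finset.sum_congr rfl fun h _ => ?_
  rw [hEapp, hvp]
  congr 1
  simp only [Matrix.mul_apply]
  rw [← Equiv.sum_comp E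
    (fun g => coll d N M' (fun i => π (f i)) g * coll d N M' g (fun i => π (h i)))]
  refine Finset.sum_congr rfl fun g _ => ?_
  rw [hEapp, coll_perm d N M M' π hM, coll_perm d N M M' π hM]

theorem stmt19 (d N : ℕ) [NeZero d] (hd : 2 ≤ d) (hN : 1 ≤ N)
    (v : (Fin N → ZMod d) → ℂ) (β : (ZMod d → ℤ) →₀ ℂ)
    (hadm : ∀ u : ZMod d → ℤ, ¬ admissible d N u → β u = 0)
    (hperm : ∀ π : Equiv.Perm (ZMod d), ∀ u : ZMod d → ℤ, β (u ∘ π) = β u)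
    (hv : v = β.sum fun u c => c • dicke d N u) :
    (∀ p q r s : ZMod d, p ≠ q → r ≠ s →
      qinner d N v ((coll d N (Smat d p q) * coll d N (Smat d p q)) *ᵥ v) =
      qinner d N v ((coll d N (Smat d r s) * coll d N (Smat d r s)) *ᵥ v)) ∧
    (∀ ℓ m : ZMod d,
      qinner d N v ((coll d N (Dmat d ℓ) * coll d N (Dmat d ℓ)) *ᵥ v) =
      qinner d N v ((coll d N (Dmat d m) * coll d N (Dmat d m)) *ᵥ v)) := by
  haveI : Fact (1 < d) := ⟨hd⟩
  have hvp : ∀ (π : Equiv.Perm (ZMod d)) (f : Fin N → ZMod d),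
      v (fun i => π (f i)) = v f := by
    intro π f
    rw [hv]
    exact vperm d N β hperm π f
  constructor
  · intro p q r s hpq hrs
    obtain ⟨π, hπ1, hπ2⟩ := exists_perm_pair hpq hrs
    refine (key_lemma d N v hvp (Smat d p q) (Smat d r s) π ?_).symm
    intro a b
    simp only [Smat, Matrix.add_apply, Matrix.single, Matrix.of_apply,
      ← hπ1, ← hπ2, EmbeddingLike.apply_eq_iff_eq]
  · intro ℓ m
    have hne : ∀ x : ZMod d, x ≠ x + 1 := by
      intro x h
      exact one_ne_zero (left_eq_add.mp h)
    obtain ⟨π, hπ1, hπ2⟩ := exists_perm_pair (hne ℓ) (hne m)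
    refine (key_lemma d N v hvp (Dmat d ℓ) (Dmat d m) π ?_).symm
    intro a b
    simp only [Dmat, Matrix.sub_apply, Matrix.single, Matrix.of_apply]
    rw [← hπ2, ← hπ1]
    simp only [EmbeddingLike.apply_eq_iff_eq]
end
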